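/- arXiv:2510.24959 — 4 statements merged into one kernel-verified Lean document; each statement's English description precedes it below -/
import Mathlib

section
/- For all integers k ≥ 2 and n ≥ 2, the k-move deduction number of the path P_n on n vertices equals ⌈n/(k+1)⌉. -/
namespace Deduction

variable {V : Type*}

/-- The number of times searcher `i` has moved before stage `s`. -/
noncomputable def movesBefore {d : ℕ} (t : ℕ → Fin d → V) (i : Fin d) (s : ℕ) : ℕ :=
  Set.ncard {s' : ℕ | s' < s ∧ t (s' + 1) i ≠ t s' i}

/-- The set of vertices protected by stage `s`: those occupied by some searcher
at some stage `s' ≤ s`. -/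
def protectedSet {d : ℕ} (t : ℕ → Fin d → V) (s : ℕ) : Set V :=
  {v | ∃ i : Fin d, ∃ s' ≤ s, t s' i = v}

/-- The unprotected neighbours of `v` at stage `s`. -/
def unprotNbrs (G : SimpleGraph V) {d : ℕ} (t : ℕ → Fin d → V) (s : ℕ) (v : V) : Set V :=
  {u | G.Adj v u ∧ u ∉ protectedSet t s}

/-- The mobile searchers located on `v` at stage `s` (those having moved fewer
than `k` times). -/
def mobileOn (k : ℕ) {d : ℕ} (t : ℕ → Fin d → V) (s : ℕ) (v : V) : Set (Fin d) :=
  {i | t s i = v ∧ movesBefore t i s < k}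

/-- A valid play of the `k`-move deduction game with `d` searchers:
searchers move along edges (or stay); each searcher moves at most `k` times;
the mobile searchers on a vertex `v` move, covering all unprotected neighbours
of `v`, exactly when there is at least one unprotected neighbour and the number
of mobile searchers on `v` is at least the number of unprotected neighbours of
`v`; otherwise the searchers on `v` stay put. -/
def ValidPlay (G : SimpleGraph V) (k : ℕ) {d : ℕ} (t : ℕ → Fin d → V) : Prop :=
  (∀ i s, t (s + 1) i = t s i ∨ G.Adj (t s i) (t (s + 1) i)) ∧
  (∀ i s, movesBefore t i s ≤ k) ∧
  (∀ s v,
    (((unprotNbrs G t s v).Nonempty ∧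
        (unprotNbrs G t s v).ncard ≤ (mobileOn k t s v).ncard) →
      (∀ i ∈ mobileOn k t s v, t (s + 1) i ∈ unprotNbrs G t s v) ∧
      (∀ u ∈ unprotNbrs G t s v, ∃ i ∈ mobileOn k t s v, t (s + 1) i = u)) ∧
    ((¬ ((unprotNbrs G t s v).Nonempty ∧
        (unprotNbrs G t s v).ncard ≤ (mobileOn k t s v).ncard)) →
      ∀ i, t s i = v → t (s + 1) i = t s i))

/-- A successful play: a valid play in which every vertex is eventually
protected (occupied by some searcher at some stage). -/
def Successful (G : SimpleGraph V) (k : ℕ) {d : ℕ} (t : ℕ → Fin d → V) : Prop :=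
  ValidPlay G k t ∧ ∀ v : V, ∃ (i : Fin d) (s : ℕ), t s i = v

/-- The `k`-move deduction number: the least number of searchers admitting a
successful layout (play) of the `k`-move deduction game on `G`. -/
noncomputable def deductionNumber (G : SimpleGraph V) (k : ℕ) : ℕ :=
  sInf {d : ℕ | ∃ t : ℕ → Fin d → V, Successful G k t}

end Deduction

namespace P10
open Deduction


def Lf (k n j : ℕ) : ℕ := min (j*(k+1)) (n-2)
def Rf (k n d j : ℕ) : ℕ := if j+1 < d then min (Lf k n j + k) (Lf k n (j+1) - 1) else n - 1
def mf (k n d j : ℕ) : ℕ := Rf k n d j - Lf k n j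
def Sf (k n d j : ℕ) : ℕ := ∑ i ∈ Finset.range j, mf k n d i
def posf (k n d j s : ℕ) : ℕ := Lf k n j + min (s - Sf k n d j) (mf k n d j)

variable {k n d : ℕ}

lemma Lf_zero : Lf k n 0 = 0 := by simp [Lf]

lemma Lf_mono : Monotone (Lf k n) := fun a b h => by
  unfold Lf; exact min_le_min (Nat.mul_le_mul_right _ h) le_rfl

lemma Lf_le : Lf k n j ≤ n - 2 := min_le_right _ _

-- if j+1 < d then Lf is unclamped
lemma Lf_eq (hk : 2 ≤ k) (hnd : (d-1)*(k+1) < n) (hj : j + 1 < d) :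
    Lf k n j = j*(k+1) := by
  have h1 : (j+1)*(k+1) ≤ (d-1)*(k+1) := Nat.mul_le_mul_right _ (by omega)
  have h2 : (j+1)*(k+1) = j*(k+1) + (k+1) := by ring
  unfold Lf; omega

lemma n_ge (hk : 2 ≤ k) (hnd : (d-1)*(k+1) < n) (hd2 : 2 ≤ d) : k + 2 ≤ n := by
  have : 1*(k+1) ≤ (d-1)*(k+1) := Nat.mul_le_mul_right _ (by omega)
  omega

-- R(d-1) ≥ n-1 ≥ ... ; last interval length ≤ k
lemma last_len (hk : 2 ≤ k) (hn : 2 ≤ n) (hdn : n ≤ d*(k+1)) (hd : 1 ≤ d) :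
    n - 1 ≤ Lf k n (d-1) + k := by
  obtain ⟨e, rfl⟩ : ∃ e, d = e + 1 := ⟨d - 1, by omega⟩
  have h2 : (e+1)*(k+1) = e*(k+1) + (k+1) := by ring
  simp only [Nat.add_sub_cancel] at *
  unfold Lf; omega

lemma Rf_le_n (hn : 2 ≤ n) : Rf k n d j ≤ n - 1 := by
  unfold Rf
  split
  · have := @Lf_le k n (j+1); omega
  · omega

lemma Rf_le (hk : 2 ≤ k) (hn : 2 ≤ n) (hd : 1 ≤ d) (hdn : n ≤ d*(k+1))
    (hj : j < d) : Rf k n d j ≤ Lf k n j + k := by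
  unfold Rf
  split
  · exact min_le_left _ _
  · have hj' : j = d - 1 := by omega
    subst hj'
    exact last_len hk hn hdn hd

lemma Lf_succ (hk : 2 ≤ k) (hnd : (d-1)*(k+1) < n) (hj : j + 1 < d) :
    Lf k n (j+1) = Rf k n d j + 1 := by
  have hd2 : 2 ≤ d := by omega
  have hn2 := n_ge hk hnd hd2
  have hLj := Lf_eq hk hnd hj
  have h1 : Lf k n (j+1) ≤ (j+1)*(k+1) := min_le_left _ _
  have h2 : (j+1)*(k+1) = j*(k+1) + (k+1) := by ring
  have h3 : 1 ≤ Lf k n (j+1) := by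
    have : 1*(k+1) ≤ (j+1)*(k+1) := Nat.mul_le_mul_right _ (by omega)
    unfold Lf; omega
  unfold Rf
  rw [if_pos hj]
  omega

lemma Lf_lt_Rf (hk : 2 ≤ k) (hn : 2 ≤ n) (hd : 1 ≤ d) (hnd : (d-1)*(k+1) < n)
    (hj : j < d) : Lf k n j + 1 ≤ Rf k n d j := by
  unfold Rf
  split
  · rename_i h
    have hLj := Lf_eq hk hnd h
    have hd2 : 2 ≤ d := by omega
    have h1 : (j+1)*(k+1) ≤ (d-1)*(k+1) := Nat.mul_le_mul_right _ (by omega)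
    have h2 : (j+1)*(k+1) = j*(k+1) + (k+1) := by ring
    -- Lf (j+1) ≥ Lf j + 2
    have h3 : Lf k n j + 2 ≤ Lf k n (j+1) := by
      unfold Lf; omega
    omega
  · have := @Lf_le k n j
    have hd2 : j = d - 1 := by omega
    have h1 : 1*(k+1) ≤ d*(k+1) := Nat.mul_le_mul_right _ (by omega)
    omega

lemma mf_pos (hk : 2 ≤ k) (hn : 2 ≤ n) (hd : 1 ≤ d) (hnd : (d-1)*(k+1) < n)
    (hj : j < d) : 1 ≤ mf k n d j := by
  have := Lf_lt_Rf hk hn hd hnd hj; unfold mf; omega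

lemma mf_le (hk : 2 ≤ k) (hn : 2 ≤ n) (hd : 1 ≤ d) (hdn : n ≤ d*(k+1))
    (hj : j < d) : mf k n d j ≤ k := by
  have := Rf_le hk hn hd hdn hj; unfold mf; omega

-- intervals are disjoint and consecutive
lemma Rf_lt_Lf (hk : 2 ≤ k) (hnd : (d-1)*(k+1) < n) (hj : j < j') (hj' : j' < d) :
    Rf k n d j < Lf k n j' := by
  have h1 := Lf_succ hk hnd (show j + 1 < d by omega)
  have h2 := Lf_mono (k := k) (n := n) (show j + 1 ≤ j' from hj)
  omega

lemma Sf_succ : Sf k n d (j+1) = Sf k n d j + mf k n d j := Finset.sum_range_succ _ _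

lemma Sf_mono (h : j ≤ j') : Sf k n d j ≤ Sf k n d j' := by
  unfold Sf
  exact Finset.sum_le_sum_of_subset (Finset.range_subset_range.2 h)

-- coverage
lemma cover (hk : 2 ≤ k) (hn : 2 ≤ n) (hd : 1 ≤ d) (hnd : (d-1)*(k+1) < n)
    (hv : v ≤ n - 1) : ∃ j < d, Lf k n j ≤ v ∧ v ≤ Rf k n d j := by
  classical
  set P : ℕ → Prop := fun j => Lf k n j ≤ v with hP
  have hP0 : P 0 := by simp [hP, Lf_zero]
  set j := Nat.findGreatest P (d-1) with hjdef
  have hPj : P j := Nat.findGreatest_spec (Nat.zero_le _) hP0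
  have hjle : j ≤ d - 1 := Nat.findGreatest_le _
  refine ⟨j, by omega, hPj, ?_⟩
  by_cases hje : j = d - 1
  · rw [hje]
    unfold Rf
    rw [if_neg (by omega)]
    exact hv
  · have hgt := Nat.findGreatest_is_greatest (show j < j+1 by omega) (show j+1 ≤ d-1 by omega)
    have hj1 : j + 1 < d := by omega
    have := Lf_succ hk hnd hj1
    simp only [hP, not_le] at hgt
    omega


lemma posf_ge : Lf k n j ≤ posf k n d j s := Nat.le_add_right _ _

lemma posf_le (hk : 2 ≤ k) (hn : 2 ≤ n) (hd : 1 ≤ d) (hnd : (d-1)*(k+1) < n)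
    (hj : j < d) : posf k n d j s ≤ Rf k n d j := by
  have h := Lf_lt_Rf hk hn hd hnd hj
  unfold posf mf; omega

lemma posf_lt_n (hk : 2 ≤ k) (hn : 2 ≤ n) (hd : 1 ≤ d) (hnd : (d-1)*(k+1) < n)
    (hj : j < d) : posf k n d j s < n := by
  have h1 := posf_le (s := s) hk hn hd hnd hj
  have h2 := Rf_le_n (k := k) (d := d) (j := j) hn
  omega

lemma posf_mono (hss : s ≤ s') : posf k n d j s ≤ posf k n d j s' := by
  unfold posf; omega

lemma posf_change_iff :
    posf k n d j (s+1) ≠ posf k n d j s ↔ Sf k n d j ≤ s ∧ s < Sf k n d j + mf k n d j := by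
  unfold posf; omega

lemma posf_visit (hw1 : Lf k n j ≤ w) (hw2 : w ≤ posf k n d j s) :
    ∃ s' ≤ s, posf k n d j s' = w := by
  refine ⟨min s (Sf k n d j + (w - Lf k n j)), min_le_left _ _, ?_⟩
  unfold posf at *
  omega

lemma posf_done (hs : Sf k n d j + mf k n d j ≤ s) : posf k n d j s = Rf k n d j + (Lf k n j - Rf k n d j) := by
  unfold posf mf at *; omega

lemma posf_done' (hk : 2 ≤ k) (hn : 2 ≤ n) (hd : 1 ≤ d) (hnd : (d-1)*(k+1) < n)
    (hj : j < d) (hs : Sf k n d j + mf k n d j ≤ s) : posf k n d j s = Rf k n d j := by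
  have h := Lf_lt_Rf hk hn hd hnd hj
  unfold posf mf at *; omega

lemma posf_march (hs1 : Sf k n d j ≤ s) (hs2 : s < Sf k n d j + mf k n d j) :
    posf k n d j s = Lf k n j + (s - Sf k n d j) := by
  unfold posf mf at *; omega

lemma posf_wait (hs : s ≤ Sf k n d j) : posf k n d j s = Lf k n j := by
  unfold posf; omega

lemma posf_ne (hk : 2 ≤ k) (hn : 2 ≤ n) (hd : 1 ≤ d) (hnd : (d-1)*(k+1) < n)
    {j j' : ℕ} (hj : j < d) (hj' : j' < d) (hne : j ≠ j') :
    posf k n d j s ≠ posf k n d j' s := by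
  rcases Nat.lt_or_ge j j' with h | h
  · have h1 := posf_le (s := s) hk hn hd hnd hj
    have h2 := Rf_lt_Lf (n := n) hk hnd h hj'
    have h3 := posf_ge (k := k) (n := n) (d := d) (j := j') (s := s)
    omega
  · have hlt : j' < j := by omega
    have h1 := posf_le (s := s) hk hn hd hnd hj'
    have h2 := Rf_lt_Lf (n := n) hk hnd hlt hj
    have h3 := posf_ge (k := k) (n := n) (d := d) (j := j) (s := s)
    omega

/-- While searcher `j` is still waiting, every earlier searcher is strictly
left of `Lf j - 1`. -/
lemma posf_lt_wait (hk : 2 ≤ k) (hn : 2 ≤ n) (hd : 1 ≤ d) (hnd : (d-1)*(k+1) < n)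
    {j j' : ℕ} (hj : j < d) (hj' : j' < j) (hs : s < Sf k n d j) :
    posf k n d j' s + 1 < Lf k n j := by
  obtain ⟨e, rfl⟩ : ∃ e, j = e + 1 := ⟨j-1, by omega⟩
  have hLs := Lf_succ hk hnd (show e+1 < d by omega)
  rcases Nat.lt_or_ge j' e with hlt | hge
  · have h1 := posf_le (s := s) hk hn hd hnd (show j' < d by omega)
    have h2 := Rf_lt_Lf (n := n) hk hnd hlt (show e < d by omega)
    have h3 := Lf_lt_Rf hk hn hd hnd (show e < d by omega)
    omega
  · have hje : j' = e := by omega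
    subst hje
    have hSs : Sf k n d (j'+1) = Sf k n d j' + mf k n d j' := Sf_succ
    have hm := mf_pos hk hn hd hnd (show j' < d by omega)
    have h3 := Lf_lt_Rf hk hn hd hnd (show j' < d by omega)
    unfold posf mf at *
    omega

def play (k n d : ℕ) (hn0 : 0 < n) : ℕ → Fin d → Fin n :=
  fun s i => ⟨posf k n d i.val s % n, Nat.mod_lt _ hn0⟩

lemma play_val (hk : 2 ≤ k) (hn : 2 ≤ n) (hd : 1 ≤ d) (hnd : (d-1)*(k+1) < n)
    (hn0 : 0 < n) (s : ℕ) (i : Fin d) :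
    (play k n d hn0 s i).val = posf k n d i.val s := by
  exact Nat.mod_eq_of_lt (posf_lt_n hk hn hd hnd i.isLt)


lemma Rf_last : Rf k n d (d-1) = n - 1 := by
  unfold Rf; rw [if_neg (by omega)]

lemma posf_step : posf k n d j (s+1) = posf k n d j s ∨
    posf k n d j (s+1) = posf k n d j s + 1 := by
  unfold posf; omega

section Game

variable {k n d : ℕ} (hk : 2 ≤ k) (hn : 2 ≤ n) (hd : 1 ≤ d)
  (hdn : n ≤ d*(k+1)) (hnd : (d-1)*(k+1) < n) (hn0 : 0 < n)

include hk hn hd hnd hn0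

lemma changeSet_eq (i : Fin d) (s : ℕ) :
    {s' : ℕ | s' < s ∧ play k n d hn0 (s'+1) i ≠ play k n d hn0 s' i}
      = Set.Ico (Sf k n d i.val) (min s (Sf k n d i.val + mf k n d i.val)) := by
  ext s'
  simp only [Set.mem_setOf_eq, Set.mem_Ico, ne_eq, Fin.ext_iff,
    play_val hk hn hd hnd hn0]
  unfold posf
  omega

lemma movesBefore_play (i : Fin d) (s : ℕ) :
    Deduction.movesBefore (play k n d hn0) i s
      = min (s - Sf k n d i.val) (mf k n d i.val) := by
  unfold Deduction.movesBefore
  rw [changeSet_eq hk hn hd hnd hn0, ← Finset.coe_Ico, Set.ncard_coe_finset,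
    Nat.card_Ico]
  omega

lemma mem_protected_play (v : Fin n) (s : ℕ) :
    v ∈ Deduction.protectedSet (play k n d hn0) s
      ↔ ∃ j < d, Lf k n j ≤ v.val ∧ v.val ≤ posf k n d j s := by
  constructor
  · rintro ⟨i, s', hs', rfl⟩
    refine ⟨i.val, i.isLt, ?_, ?_⟩ <;> rw [play_val hk hn hd hnd hn0]
    · exact posf_ge
    · exact posf_mono hs'
  · rintro ⟨j, hj, h1, h2⟩
    obtain ⟨s', hs', heq⟩ := posf_visit h1 h2
    exact ⟨⟨j, hj⟩, s', hs', Fin.ext (by rw [play_val hk hn hd hnd hn0]; exact heq)⟩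

lemma mem_unprot_play (u v : Fin n) (s : ℕ) :
    u ∈ Deduction.unprotNbrs (SimpleGraph.pathGraph n) (play k n d hn0) s v ↔
      ((v.val + 1 = u.val ∨ u.val + 1 = v.val) ∧
        ¬ ∃ j < d, Lf k n j ≤ u.val ∧ u.val ≤ posf k n d j s) := by
  unfold Deduction.unprotNbrs
  rw [Set.mem_setOf_eq, SimpleGraph.pathGraph_adj, mem_protected_play hk hn hd hnd hn0]

lemma mem_mobile_play (i : Fin d) (v : Fin n) (s : ℕ) :
    i ∈ Deduction.mobileOn k (play k n d hn0) s v ↔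
      posf k n d i.val s = v.val ∧ min (s - Sf k n d i.val) (mf k n d i.val) < k := by
  unfold Deduction.mobileOn
  rw [Set.mem_setOf_eq, movesBefore_play hk hn hd hnd hn0, Fin.ext_iff,
    play_val hk hn hd hnd hn0]

include hdn

lemma play_valid : Deduction.ValidPlay (SimpleGraph.pathGraph n) k (play k n d hn0) := by
  refine ⟨?_, ?_, ?_⟩
  · -- moves along edges
    intro i s
    rcases posf_step (k := k) (n := n) (d := d) (j := i.val) (s := s) with h | h
    · exact Or.inl (Fin.ext (by rw [play_val hk hn hd hnd hn0, play_val hk hn hd hnd hn0, h]))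
    · refine Or.inr ?_
      rw [SimpleGraph.pathGraph_adj]
      left
      rw [play_val hk hn hd hnd hn0, play_val hk hn hd hnd hn0, h]
  · -- at most k moves
    intro i s
    rw [movesBefore_play hk hn hd hnd hn0]
    have := mf_le hk hn hd hdn i.isLt
    omega
  · -- the move rule
    intro s v
    by_cases hocc : ∃ i : Fin d, posf k n d i.val s = v.val
    case neg =>
      -- v is unoccupied: no mobile searchers, and condition fails when nonempty
      have hmob : Deduction.mobileOn k (play k n d hn0) s v = ∅ := by
        ext i
        rw [mem_mobile_play hk hn hd hnd hn0]
        simp only [Set.mem_empty_iff_false, iff_false, not_and]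
        intro h1
        exact absurd ⟨i, h1⟩ hocc
      constructor
      · rintro ⟨⟨u, hu⟩, hle⟩
        exfalso
        rw [hmob, Set.ncard_empty] at hle
        have hpos : 0 < (Deduction.unprotNbrs (SimpleGraph.pathGraph n)
            (play k n d hn0) s v).ncard :=
          (Set.ncard_pos (Set.toFinite _)).2 ⟨u, hu⟩
        omega
      · intro _ i hi
        exfalso
        apply hocc
        refine ⟨i, ?_⟩
        rw [← play_val hk hn hd hnd hn0]
        exact congrArg Fin.val hi
    case pos =>
      obtain ⟨i0, hi0⟩ := hocc
      have hid : i0.val < d := i0.isLt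
      have huniq : ∀ i : Fin d, posf k n d i.val s = v.val → i = i0 := by
        intro i h1
        by_contra hne
        exact posf_ne hk hn hd hnd i.isLt i0.isLt
          (fun h => hne (Fin.ext h)) (h1.trans hi0.symm)
      have hLR := Lf_lt_Rf hk hn hd hnd i0.isLt
      have hmle := mf_le hk hn hd hdn i0.isLt
      have hmpos := mf_pos hk hn hd hnd i0.isLt
      have hmf : mf k n d i0.val = Rf k n d i0.val - Lf k n i0.val := rfl
      have hRn := Rf_le_n (k := k) (d := d) (j := i0.val) hn
      by_cases hs1 : s < Sf k n d i0.val
      · -- WAITING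
        have hj0 : 0 < i0.val := by
          by_contra h0
          have : i0.val = 0 := by omega
          rw [this] at hs1
          simp [Sf] at hs1
        have hd2 : 2 ≤ d := by omega
        have hL1 : Lf k n 1 = Rf k n d 0 + 1 := Lf_succ hk hnd (by omega)
        have hR0 := Lf_lt_Rf hk hn hd hnd (show 0 < d by omega)
        have hL0 : Lf k n 0 = 0 := Lf_zero
        have hLm : Lf k n 1 ≤ Lf k n i0.val := Lf_mono hj0
        have hLj2 : 2 ≤ Lf k n i0.val := by omega
        have hpv : posf k n d i0.val s = Lf k n i0.val := posf_wait (by omega)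
        have hvv : v.val = Lf k n i0.val := by rw [← hi0, hpv]
        have hU2 : Lf k n i0.val + 1 < n := by omega
        obtain ⟨u1, hu1⟩ : ∃ u1 : Fin n, u1.val = Lf k n i0.val - 1 :=
          ⟨⟨_, by omega⟩, rfl⟩
        obtain ⟨u2, hu2⟩ : ∃ u2 : Fin n, u2.val = Lf k n i0.val + 1 :=
          ⟨⟨_, by omega⟩, rfl⟩
        have hups : Deduction.unprotNbrs (SimpleGraph.pathGraph n) (play k n d hn0) s v
            = {u1, u2} := by
          ext u
          rw [mem_unprot_play hk hn hd hnd hn0]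
          constructor
          · rintro ⟨hadj, hnp⟩
            rcases hadj with h | h
            · right
              exact Fin.ext (by omega)
            · left
              exact Fin.ext (by omega)
          · rintro (rfl | rfl)
            · refine ⟨Or.inr (by omega), ?_⟩
              rintro ⟨j', hj', h1, h2⟩
              rw [hu1] at h1 h2
              rcases Nat.lt_or_ge j' i0.val with h | h
              · have := posf_lt_wait hk hn hd hnd i0.isLt h hs1
                omega
              · have := Lf_mono (k := k) (n := n) h
                omega
            · refine ⟨Or.inl (by omega), ?_⟩
              rintro ⟨j', hj', h1, h2⟩
              rw [hu2] at h1 h2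
              rcases Nat.lt_trichotomy j' i0.val with h | h | h
              · have := posf_lt_wait hk hn hd hnd i0.isLt h hs1
                omega
              · subst h
                rw [hpv] at h2
                omega
              · have hsucc : Lf k n (i0.val+1) = Rf k n d i0.val + 1 :=
                  Lf_succ hk hnd (by omega)
                have := Lf_mono (k := k) (n := n) (show i0.val + 1 ≤ j' by omega)
                omega
        have hne12 : u1 ≠ u2 := by
          intro h
          have := congrArg Fin.val h
          omega
        have hcard2 : (Deduction.unprotNbrs (SimpleGraph.pathGraph n)
            (play k n d hn0) s v).ncard = 2 := by
          rw [hups]; exact Set.ncard_pair hne12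
        have hmoble : (Deduction.mobileOn k (play k n d hn0) s v).ncard ≤ 1 := by
          have hsub : Deduction.mobileOn k (play k n d hn0) s v ⊆ {i0} := by
            intro i hi
            rw [mem_mobile_play hk hn hd hnd hn0] at hi
            exact huniq i hi.1
          calc (Deduction.mobileOn k (play k n d hn0) s v).ncard
              ≤ ({i0} : Set (Fin d)).ncard := Set.ncard_le_ncard hsub (Set.toFinite _)
            _ = 1 := Set.ncard_singleton _
        constructor
        · rintro ⟨_, hle⟩
          rw [hcard2] at hle
          omega
        · intro _ i hi
          have hieq : i = i0 := huniq i (by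
            rw [← play_val hk hn hd hnd hn0]; exact congrArg Fin.val hi)
          subst hieq
          apply Fin.ext
          rw [play_val hk hn hd hnd hn0, play_val hk hn hd hnd hn0,
            posf_wait (by omega), posf_wait (by omega)]
      · by_cases hs2 : s < Sf k n d i0.val + mf k n d i0.val
        · -- MARCHING
          have hpv : posf k n d i0.val s
              = Lf k n i0.val + (s - Sf k n d i0.val) := posf_march (by omega) hs2
          have hpR : posf k n d i0.val s < Rf k n d i0.val := by omega
          have hpL : Lf k n i0.val ≤ posf k n d i0.val s := posf_ge
          obtain ⟨u2, hu2⟩ : ∃ u2 : Fin n, u2.val = posf k n d i0.val s + 1 :=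
            ⟨⟨_, by omega⟩, rfl⟩
          have hstep : posf k n d i0.val (s+1) = posf k n d i0.val s + 1 := by
            unfold posf mf at *
            omega
          have hups : Deduction.unprotNbrs (SimpleGraph.pathGraph n) (play k n d hn0) s v
              = {u2} := by
            ext u
            rw [mem_unprot_play hk hn hd hnd hn0]
            constructor
            · rintro ⟨hadj, hnp⟩
              rcases hadj with h | h
              · exact Set.mem_singleton_iff.2 (Fin.ext (by omega))
              · exfalso
                apply hnp
                rcases Nat.lt_or_ge u.val (Lf k n i0.val) with hcase | hcase
                · -- u = Lf i0 - 1, only possible when s = Sf i0; protected by i0-1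
                  have hsS : s = Sf k n d i0.val := by omega
                  have huval : u.val + 1 = Lf k n i0.val := by omega
                  have hj0 : 0 < i0.val := by
                    by_contra h0
                    have h00 : i0.val = 0 := by omega
                    rw [h00, Lf_zero] at huval
                    omega
                  obtain ⟨e, he⟩ : ∃ e, i0.val = e + 1 := ⟨i0.val - 1, by omega⟩
                  rw [he] at hsS huval
                  have hsucc : Lf k n (e+1) = Rf k n d e + 1 :=
                    Lf_succ hk hnd (by omega)
                  have hSs : Sf k n d (e+1) = Sf k n d e + mf k n d e := Sf_succ
                  have hdone : posf k n d e s = Rf k n d e :=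
                    posf_done' hk hn hd hnd (by omega) (by omega)
                  have hLRe := Lf_lt_Rf hk hn hd hnd (show e < d by omega)
                  exact ⟨e, by omega, by omega, by omega⟩
                · exact ⟨i0.val, i0.isLt, hcase, by omega⟩
            · rintro rfl
              refine ⟨Or.inl (by omega), ?_⟩
              rintro ⟨j', hj', h1, h2⟩
              rw [hu2] at h1 h2
              rcases Nat.lt_trichotomy j' i0.val with h | h | h
              · have hple := posf_le (s := s) hk hn hd hnd hj'
                have := Rf_lt_Lf (n := n) hk hnd h i0.isLt
                omega
              · subst h
                omega
              · have hsucc : Lf k n (i0.val+1) = Rf k n d i0.val + 1 :=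
                  Lf_succ hk hnd (by omega)
                have := Lf_mono (k := k) (n := n) (show i0.val + 1 ≤ j' by omega)
                omega
          have hmobeq : Deduction.mobileOn k (play k n d hn0) s v = {i0} := by
            ext i
            rw [mem_mobile_play hk hn hd hnd hn0]
            constructor
            · rintro ⟨h1, _⟩
              exact huniq i h1
            · rintro rfl
              exact ⟨hi0, by omega⟩
          constructor
          · intro _
            constructor
            · intro i hi
              rw [hmobeq, Set.mem_singleton_iff] at hi
              subst hi
              rw [hups, Set.mem_singleton_iff]
              apply Fin.ext
              rw [play_val hk hn hd hnd hn0, hstep, hu2]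
            · intro u hu
              rw [hups, Set.mem_singleton_iff] at hu
              subst hu
              refine ⟨i0, by rw [hmobeq]; exact rfl, ?_⟩
              apply Fin.ext
              rw [play_val hk hn hd hnd hn0, hstep, hu2]
          · intro hcon
            exfalso
            apply hcon
            refine ⟨⟨u2, by rw [hups]; exact rfl⟩, ?_⟩
            rw [hups, hmobeq, Set.ncard_singleton, Set.ncard_singleton]
        · -- DONE
          have hpv : posf k n d i0.val s = Rf k n d i0.val :=
            posf_done' hk hn hd hnd i0.isLt (by omega)
          have hups : Deduction.unprotNbrs (SimpleGraph.pathGraph n) (play k n d hn0) s v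
              = ∅ := by
            ext u
            rw [mem_unprot_play hk hn hd hnd hn0]
            simp only [Set.mem_empty_iff_false, iff_false, not_and]
            intro hadj
            rw [not_not]
            rcases hadj with h | h
            · -- u is to the right of Rf i0
              rcases Nat.lt_or_ge (i0.val + 1) d with hcase | hcase
              · have hsucc : Lf k n (i0.val+1) = Rf k n d i0.val + 1 :=
                  Lf_succ hk hnd hcase
                exact ⟨i0.val + 1, hcase, by omega, by
                  have : Lf k n (i0.val+1) ≤ posf k n d (i0.val+1) s := posf_ge
                  omega⟩
              · exfalso
                have hlast : i0.val = d - 1 := by omega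
                have hRl : Rf k n d (d-1) = n - 1 := Rf_last
                rw [← hlast] at hRl
                have := u.isLt
                omega
            · exact ⟨i0.val, i0.isLt, by omega, by omega⟩
          constructor
          · rintro ⟨⟨u, hu⟩, _⟩
            rw [hups] at hu
            exact absurd hu (Set.notMem_empty u)
          · intro _ i hi
            have hieq : i = i0 := huniq i (by
              rw [← play_val hk hn hd hnd hn0]; exact congrArg Fin.val hi)
            subst hieq
            apply Fin.ext
            rw [play_val hk hn hd hnd hn0, play_val hk hn hd hnd hn0, hpv,
              posf_done' hk hn hd hnd (Fin.isLt _) (by omega)]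

lemma play_successful :
    Deduction.Successful (SimpleGraph.pathGraph n) k (play k n d hn0) := by
  refine ⟨play_valid hk hn hd hdn hnd hn0, ?_⟩
  intro v
  obtain ⟨j, hj, h1, h2⟩ := cover hk hn hd hnd (show v.val ≤ n - 1 by
    have := v.isLt; omega)
  have hdone : posf k n d j (Sf k n d j + mf k n d j) = Rf k n d j :=
    posf_done' hk hn hd hnd hj le_rfl
  obtain ⟨s', _, heq⟩ := posf_visit (d := d) (j := j) (s := Sf k n d j + mf k n d j) h1 (by omega)
  exact ⟨⟨j, hj⟩, s', Fin.ext (by rw [play_val hk hn hd hnd hn0]; exact heq)⟩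

end Game

lemma lower_bound {k n x : ℕ} (t : ℕ → Fin x → Fin n)
    (h : Deduction.Successful (SimpleGraph.pathGraph n) k t) : n ≤ x * (k + 1) := by
  classical
  have hmv := h.1.2.1
  have key : ∀ i : Fin x, (Set.range fun s => t s i).ncard ≤ k + 1 := by
    intro i
    set C : Set ℕ := {s' | t (s'+1) i ≠ t s' i} with hC
    have hCfin : C.Finite := by
      by_contra hinf
      have hinf : C.Infinite := hinf
      obtain ⟨F, hsub, hcard⟩ := Set.Infinite.exists_subset_card_eq hinf (k+1)
      set s := (F.sup id) + 1 with hs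
      have hsub2 : (↑F : Set ℕ) ⊆ {s' | s' < s ∧ t (s'+1) i ≠ t s' i} := by
        intro a ha
        refine ⟨?_, hsub ha⟩
        have : id a ≤ F.sup id := Finset.le_sup ha
        simp only [id] at this
        omega
      have h1 : (↑F : Set ℕ).ncard ≤ ({s' | s' < s ∧ t (s'+1) i ≠ t s' i}).ncard :=
        Set.ncard_le_ncard hsub2
          ((Set.finite_Iio s).subset (fun a ha => ha.1))
      rw [Set.ncard_coe_finset, hcard] at h1
      have h2 := hmv i s
      unfold Deduction.movesBefore at h2
      omega
    obtain ⟨m, hm⟩ := hCfin.bddAbove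
    have hCeq : C = {s' | s' < m + 1 ∧ t (s'+1) i ≠ t s' i} := by
      ext a
      exact ⟨fun ha => ⟨by have := hm ha; omega, ha⟩, fun ha => ha.2⟩
    have hCk : C.ncard ≤ k := by
      have h2 := hmv i (m+1)
      unfold Deduction.movesBefore at h2
      rw [hCeq]
      exact h2
    have hrange : Set.range (fun s => t s i)
        ⊆ insert (t 0 i) ((fun s' => t (s'+1) i) '' C) := by
      rintro v ⟨s, rfl⟩
      induction s with
      | zero => exact Set.mem_insert _ _
      | succ m ih =>
        by_cases hch : t (m+1) i = t m i
        · simpa [hch] using ih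
        · exact Set.mem_insert_of_mem _ ⟨m, hch, rfl⟩
    calc (Set.range fun s => t s i).ncard
        ≤ (insert (t 0 i) ((fun s' => t (s'+1) i) '' C)).ncard :=
          Set.ncard_le_ncard hrange (Set.Finite.insert _ (hCfin.image _))
      _ ≤ ((fun s' => t (s'+1) i) '' C).ncard + 1 := Set.ncard_insert_le _ _
      _ ≤ k + 1 := by
          have := Set.ncard_image_le (f := fun s' => t (s'+1) i) hCfin
          omega
  -- union over searchers covers everything
  set Vi : Fin x → Finset (Fin n) := fun i => (Set.toFinite (Set.range fun s => t s i)).toFinset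
    with hVi
  have hVicard : ∀ i, (Vi i).card ≤ k + 1 := by
    intro i
    have := key i
    rwa [Set.ncard_eq_toFinset_card _ (Set.toFinite _)] at this
  have hcover : (Finset.univ : Finset (Fin n)) ⊆ Finset.univ.biUnion Vi := by
    intro v _
    obtain ⟨i, s, hs⟩ := h.2 v
    refine Finset.mem_biUnion.2 ⟨i, Finset.mem_univ _, ?_⟩
    rw [hVi]
    simp only [Set.Finite.mem_toFinset, Set.mem_range]
    exact ⟨s, hs⟩
  calc n = (Finset.univ : Finset (Fin n)).card := by simp
    _ ≤ (Finset.univ.biUnion Vi).card := Finset.card_le_card hcover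
    _ ≤ ∑ i : Fin x, (Vi i).card := Finset.card_biUnion_le
    _ ≤ ∑ _i : Fin x, (k+1) := Finset.sum_le_sum (fun i _ => hVicard i)
    _ = x * (k+1) := by simp [Finset.sum_const, Finset.card_univ, mul_comm]

end P10

/-- `d_k(P_n) = ⌈n / (k+1)⌉` for `k ≥ 2`, `n ≥ 2`. -/
theorem stmt_10 (k n : ℕ) (hk : 2 ≤ k) (hn : 2 ≤ n) :
    Deduction.deductionNumber (SimpleGraph.pathGraph n) k =
      ⌈(n : ℚ) / (k + 1)⌉₊ := by
  have hk1 : (0:ℚ) < (k:ℚ) + 1 := by positivity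
  set c := ⌈(n : ℚ) / (k + 1)⌉₊ with hc
  have hc1 : n ≤ c * (k+1) := by
    have h := Nat.le_ceil ((n : ℚ) / (k + 1))
    rw [div_le_iff₀ hk1, ← hc] at h
    exact_mod_cast h
  have hc0 : 1 ≤ c := by
    rw [hc]
    have hq : (0:ℚ) < (n:ℚ) / ((k:ℚ)+1) := by
      apply div_pos _ hk1
      exact_mod_cast (by omega : 0 < n)
    exact Nat.ceil_pos.2 hq
  have hc2 : (c-1) * (k+1) < n := by
    have h : (c - 1 : ℕ) < c := by omega
    rw [hc] at h
    have h2 : ((c-1 : ℕ) : ℚ) < (n:ℚ)/((k:ℚ)+1) := Nat.lt_ceil.1 h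
    rw [lt_div_iff₀ hk1] at h2
    exact_mod_cast h2
  have hmem : c ∈ {d | ∃ t : ℕ → Fin d → Fin n,
      Deduction.Successful (SimpleGraph.pathGraph n) k t} :=
    ⟨P10.play k n c (by omega), P10.play_successful hk hn hc0 hc1 hc2 (by omega)⟩
  have hub : Deduction.deductionNumber (SimpleGraph.pathGraph n) k ≤ c :=
    Nat.sInf_le hmem
  have hmem2 := Nat.sInf_mem (⟨c, hmem⟩ : Set.Nonempty {d | ∃ t : ℕ → Fin d → Fin n,
      Deduction.Successful (SimpleGraph.pathGraph n) k t})
  obtain ⟨t, ht⟩ := hmem2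
  have hlb : n ≤ (Deduction.deductionNumber (SimpleGraph.pathGraph n) k) * (k+1) :=
    P10.lower_bound t ht
  have hlb2 : c ≤ Deduction.deductionNumber (SimpleGraph.pathGraph n) k := by
    rw [hc, Nat.ceil_le, div_le_iff₀ hk1]
    exact_mod_cast hlb
  omega
end

section
/- For all integers k ≥ 2 and n ≥ 3, the k-move deduction number of the cycle C_n equals max{2, ⌈n/(k+1)⌉}. -/
namespace Deduction

variable {V : Type*}

/-! ## Auxiliary machinery -/

/-- The per-stage, per-vertex obligation in `ValidPlay`. -/
def Oblig (G : SimpleGraph V) (k : ℕ) {d : ℕ} (t : ℕ → Fin d → V) (s : ℕ) (v : V) : Prop :=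
  (((unprotNbrs G t s v).Nonempty ∧
      (unprotNbrs G t s v).ncard ≤ (mobileOn k t s v).ncard) →
    (∀ i ∈ mobileOn k t s v, t (s + 1) i ∈ unprotNbrs G t s v) ∧
    (∀ u ∈ unprotNbrs G t s v, ∃ i ∈ mobileOn k t s v, t (s + 1) i = u)) ∧
  ((¬ ((unprotNbrs G t s v).Nonempty ∧
      (unprotNbrs G t s v).ncard ≤ (mobileOn k t s v).ncard)) →
    ∀ i, t s i = v → t (s + 1) i = t s i)

/-- Situation: the searchers on `v` must (and do) stay put. -/
lemma oblig_of_stay [Finite V] {G : SimpleGraph V} {k d : ℕ} {t : ℕ → Fin d → V} {s : ℕ} {v : V}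
    (h : unprotNbrs G t s v = ∅ ∨ (mobileOn k t s v).ncard < (unprotNbrs G t s v).ncard)
    (hstay : ∀ i, t s i = v → t (s + 1) i = t s i) : Oblig G k t s v := by
  constructor
  · rintro ⟨hne, hle⟩
    exfalso
    rcases h with h | h
    · rw [h] at hne; exact Set.not_nonempty_empty hne
    · omega
  · intro _; exact hstay

/-- Situation: no searcher on `v`. -/
lemma oblig_of_none [Finite V] {G : SimpleGraph V} {k d : ℕ} {t : ℕ → Fin d → V} {s : ℕ} {v : V}
    (h : ∀ i, t s i ≠ v) : Oblig G k t s v := by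
  have hm : mobileOn k t s v = ∅ := by
    ext i; simp only [mobileOn, Set.mem_setOf_eq, Set.mem_empty_iff_false, iff_false]
    rintro ⟨hi, -⟩; exact h i hi
  refine oblig_of_stay ?_ (fun i hi => absurd hi (h i))
  by_cases hu : unprotNbrs G t s v = ∅
  · exact Or.inl hu
  · refine Or.inr ?_
    rw [hm, Set.ncard_empty]
    exact (Set.ncard_pos (Set.toFinite _)).mpr (Set.nonempty_iff_ne_empty.mpr hu)

/-- Situation: a single mobile searcher `j` on `v`, a single unprotected
neighbour `u`, and searcher `j` moves there. -/
lemma oblig_of_move {G : SimpleGraph V} {k d : ℕ} {t : ℕ → Fin d → V} {s : ℕ} {v : V}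
    {u : V} {j : Fin d} (hu : unprotNbrs G t s v = {u}) (hm : mobileOn k t s v = {j})
    (hj : t (s + 1) j = u) : Oblig G k t s v := by
  constructor
  · intro _
    constructor
    · intro i hi
      rw [hm, Set.mem_singleton_iff] at hi
      rw [hi, hu, hj]; exact rfl
    · intro u' hu'
      rw [hu, Set.mem_singleton_iff] at hu'
      exact ⟨j, by rw [hm]; exact rfl, by rw [hj, hu']⟩
  · intro hneg
    exfalso
    exact hneg ⟨by rw [hu]; exact ⟨u, rfl⟩, by rw [hu, hm, Set.ncard_singleton, Set.ncard_singleton]⟩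

lemma validPlay_iff (G : SimpleGraph V) (k : ℕ) {d : ℕ} (t : ℕ → Fin d → V) :
    ValidPlay G k t ↔
      (∀ i s, t (s + 1) i = t s i ∨ G.Adj (t s i) (t (s + 1) i)) ∧
      (∀ i s, movesBefore t i s ≤ k) ∧ (∀ s v, Oblig G k t s v) := Iff.rfl

/-! ### Cast arithmetic in `Fin n` -/

open Fin.NatCast Fin.IntCast Fin.CommRing

section CastFin
variable {m : ℕ}
local notation "n" => m + 3

lemma cast_val_of_lt {a : ℕ} (h : a < n) : ((a : ℕ) : Fin n).val = a := by
  haveI : NeZero n := ⟨by omega⟩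
  exact Fin.val_cast_of_lt h

lemma cast_inj_of_lt {a b : ℕ} (ha : a < n) (hb : b < n) :
    ((a : ℕ) : Fin n) = ((b : ℕ) : Fin n) ↔ a = b := by
  constructor
  · intro h
    have := congrArg Fin.val h
    rwa [cast_val_of_lt ha, cast_val_of_lt hb] at this
  · rintro rfl; rfl

lemma cast_n_eq_zero : ((n : ℕ) : Fin n) = 0 := by
  haveI : NeZero n := ⟨by omega⟩
  exact Fin.natCast_self n

lemma cast_pred {a : ℕ} (h : 1 ≤ a) : (((a - 1 : ℕ)) : Fin n) = ((a : ℕ) : Fin n) - 1 := by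
  obtain ⟨b, rfl⟩ : ∃ b, a = b + 1 := ⟨a - 1, by omega⟩
  simp

lemma cast_succ (a : ℕ) : (((a + 1 : ℕ)) : Fin n) = ((a : ℕ) : Fin n) + 1 := by
  simp

/-- Adjacency in the cycle graph, for casts. -/
lemma adj_iff {u v : Fin n} :
    (SimpleGraph.cycleGraph n).Adj u v ↔ (v = u - 1 ∨ v = u + 1) := by
  refine (@SimpleGraph.cycleGraph_adj (m + 1) u v).trans ?_
  constructor
  · rintro (h | h)
    · left; rw [sub_eq_iff_eq_add] at h; rw [h]; ring
    · right; rw [sub_eq_iff_eq_add] at h; rw [h]; ring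
  · rintro (rfl | rfl)
    · left; ring
    · right; ring

lemma adj_cast_succ (a : ℕ) :
    (SimpleGraph.cycleGraph n).Adj ((a : ℕ) : Fin n) (((a + 1 : ℕ)) : Fin n) := by
  rw [adj_iff, cast_succ]
  exact Or.inr rfl

lemma adj_cast_pred {a : ℕ} (h : 1 ≤ a) :
    (SimpleGraph.cycleGraph n).Adj ((a : ℕ) : Fin n) (((a - 1 : ℕ)) : Fin n) := by
  rw [adj_iff, cast_pred h]
  exact Or.inl rfl

/-- `unprotNbrs` on the cycle, described via two natural-number representatives
of the two neighbours. -/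
lemma unprotNbrs_cycle_eq {d : ℕ} (t : ℕ → Fin d → Fin n) (s : ℕ) (a al ar : ℕ)
    (hl : ((al : ℕ) : Fin n) = ((a : ℕ) : Fin n) - 1)
    (hr : ((ar : ℕ) : Fin n) = ((a : ℕ) : Fin n) + 1) :
    unprotNbrs (SimpleGraph.cycleGraph n) t s ((a : ℕ) : Fin n) =
      {u | (u = ((al : ℕ) : Fin n) ∧ ((al : ℕ) : Fin n) ∉ protectedSet t s) ∨
           (u = ((ar : ℕ) : Fin n) ∧ ((ar : ℕ) : Fin n) ∉ protectedSet t s)} := by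
  ext u
  simp only [unprotNbrs, Set.mem_setOf_eq, adj_iff, ← hl, ← hr]
  constructor
  · rintro ⟨h1 | h1, h2⟩
    · exact Or.inl ⟨h1, h1 ▸ h2⟩
    · exact Or.inr ⟨h1, h1 ▸ h2⟩
  · rintro (⟨rfl, h⟩ | ⟨rfl, h⟩)
    · exact ⟨Or.inl rfl, h⟩
    · exact ⟨Or.inr rfl, h⟩

end CastFin

/-- Computation of `movesBefore` for a trajectory which moves exactly during
`[b, b + L)`. -/
lemma movesBefore_ramp {d : ℕ} {t : ℕ → Fin d → V} {i : Fin d} {b L : ℕ}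
    (h : ∀ s', t (s' + 1) i ≠ t s' i ↔ (b ≤ s' ∧ s' < b + L)) (s : ℕ) :
    movesBefore t i s = min (s - b) L := by
  unfold movesBefore
  have : {s' : ℕ | s' < s ∧ t (s' + 1) i ≠ t s' i} = ↑(Finset.Ico b (min s (b + L))) := by
    ext s'
    simp only [Set.mem_setOf_eq, h s', Finset.coe_Ico, Set.mem_Ico]
    omega
  rw [this, Set.ncard_coe_finset, Nat.card_Ico]
  omega

/-- Membership in the cast image of a set of small naturals. -/
lemma mem_cast_image {m : ℕ} {N : Set ℕ} (hN : ∀ x ∈ N, x < m + 3) {w : ℕ}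
    (hw : w < m + 3) : ((w : ℕ) : Fin (m + 3)) ∈ (fun x : ℕ => ((x : ℕ) : Fin (m + 3))) '' N ↔ w ∈ N := by
  constructor
  · rintro ⟨x, hx, hxw⟩
    rw [cast_inj_of_lt (hN x hx) hw] at hxw
    rwa [hxw] at hx
  · intro h; exact ⟨w, h, rfl⟩


/-! ### Lower bound : counting -/

/-- The set of stages at which searcher `i` moves. -/
def moveSet {d : ℕ} (t : ℕ → Fin d → V) (i : Fin d) : Set ℕ :=
  {s' : ℕ | t (s' + 1) i ≠ t s' i}

lemma movesBefore_eq {d : ℕ} (t : ℕ → Fin d → V) (i : Fin d) (s : ℕ) :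
    movesBefore t i s = (moveSet t i ∩ Set.Iio s).ncard := by
  unfold movesBefore moveSet
  congr 1
  ext s'
  simp [and_comm]

lemma moveSet_finite {d k : ℕ} {t : ℕ → Fin d → V} (h : ∀ i s, movesBefore t i s ≤ k)
    (i : Fin d) : (moveSet t i).Finite := by
  by_contra hinf
  rw [← Set.Infinite] at hinf
  obtain ⟨F, hFsub, hFfin, hFcard⟩ := hinf.exists_subset_ncard_eq (k + 1)
  obtain ⟨s, hs⟩ := hFfin.bddAbove
  have hsub : F ⊆ moveSet t i ∩ Set.Iio (s + 1) := by
    intro x hx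
    exact ⟨hFsub hx, Nat.lt_succ_of_le (hs hx)⟩
  have := Set.ncard_le_ncard hsub ((moveSet_finite_aux t i s).inter_of_right _)
  rw [hFcard, ← movesBefore_eq] at this
  exact absurd (this.trans (h i (s + 1))) (by omega)
where
  moveSet_finite_aux (t : ℕ → Fin d → V) (i : Fin d) (s : ℕ) : (Set.Iio (s+1) : Set ℕ).Finite :=
    Set.finite_Iio _

lemma moveSet_ncard_le {d k : ℕ} {t : ℕ → Fin d → V} (h : ∀ i s, movesBefore t i s ≤ k)
    (i : Fin d) : (moveSet t i).ncard ≤ k := by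
  have hfin := moveSet_finite h i
  obtain ⟨s, hs⟩ := hfin.bddAbove
  have : moveSet t i = moveSet t i ∩ Set.Iio (s + 1) := by
    refine (Set.inter_eq_left.mpr ?_).symm
    intro x hx; exact Nat.lt_succ_of_le (hs hx)
  rw [this, ← movesBefore_eq]
  exact h i (s + 1)

lemma mem_image_moves {d : ℕ} (t : ℕ → Fin d → V) (i : Fin d) (s : ℕ) :
    t s i ∈ insert (t 0 i) ((fun s' => t (s' + 1) i) '' moveSet t i) := by
  induction s with
  | zero => exact Set.mem_insert _ _
  | succ s ih =>
    by_cases hmv : t (s + 1) i = t s i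
    · rw [hmv]; exact ih
    · exact Set.mem_insert_iff.mpr (Or.inr ⟨s, hmv, rfl⟩)

/-- Each searcher visits at most `k+1` vertices. -/
lemma visited_ncard_le {d k : ℕ} {t : ℕ → Fin d → V} (h : ∀ i s, movesBefore t i s ≤ k)
    (i : Fin d) : (Set.range fun s => t s i).ncard ≤ k + 1 := by
  have hsub : (Set.range fun s => t s i) ⊆
      insert (t 0 i) ((fun s' => t (s' + 1) i) '' moveSet t i) := by
    rintro v ⟨s, rfl⟩; exact mem_image_moves t i s
  have hfin : ((fun s' => t (s' + 1) i) '' moveSet t i).Finite :=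
    (moveSet_finite h i).image _
  calc (Set.range fun s => t s i).ncard
      ≤ (insert (t 0 i) ((fun s' => t (s' + 1) i) '' moveSet t i)).ncard :=
        Set.ncard_le_ncard hsub (hfin.insert _)
    _ ≤ ((fun s' => t (s' + 1) i) '' moveSet t i).ncard + 1 := Set.ncard_insert_le _ _
    _ ≤ (moveSet t i).ncard + 1 := by
        have := Set.ncard_image_le (f := fun s' => t (s' + 1) i) (moveSet_finite h i)
        omega
    _ ≤ k + 1 := by have := moveSet_ncard_le h i; omega

/-- Counting lower bound: a successful play with `d` searchers covers everything. -/
lemma card_le_of_successful {G : SimpleGraph V} [Fintype V] [DecidableEq V] {d k : ℕ}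
    {t : ℕ → Fin d → V} (h : Successful G k t) : Fintype.card V ≤ d * (k + 1) := by
  classical
  obtain ⟨⟨_, hmv, _⟩, hcov⟩ := h
  have hsub : (Finset.univ : Finset V) ⊆
      Finset.univ.biUnion (fun i : Fin d => (Set.range fun s => t s i).toFinite.toFinset) := by
    intro v _
    obtain ⟨i, s, hs⟩ := hcov v
    exact Finset.mem_biUnion.mpr ⟨i, Finset.mem_univ _, by simp [← hs]⟩
  calc Fintype.card V = (Finset.univ : Finset V).card := rfl
    _ ≤ _ := Finset.card_le_card hsub
    _ ≤ ∑ _i : Fin d, (k+1) := by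
        refine (Finset.card_biUnion_le).trans (Finset.sum_le_sum ?_)
        intro i _
        rw [← Set.ncard_eq_toFinset_card _ (Set.range fun s => t s i).toFinite]
        exact visited_ncard_le hmv i
    _ = d * (k+1) := by simp [Finset.sum_const, mul_comm]



section CastFin2
variable {m : ℕ}

lemma mem_prot {d : ℕ} (t : ℕ → Fin d → Fin (m+3)) {s' s : ℕ} (h : s' ≤ s) (i : Fin d) :
    t s' i ∈ protectedSet t s := ⟨i, s', h, rfl⟩

lemma cast_eq_cast_iff {a b : ℕ} (ha : a ≤ m + 3) (hb : b ≤ m + 3) :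
    ((a : ℕ) : Fin (m+3)) = ((b : ℕ) : Fin (m+3)) ↔
      (a = b ∨ (a = 0 ∧ b = m + 3) ∨ (a = m + 3 ∧ b = 0)) := by
  rcases eq_or_lt_of_le ha with rfl | ha' <;> rcases eq_or_lt_of_le hb with rfl | hb'
  · simp
  · rw [cast_n_eq_zero, show (0 : Fin (m+3)) = ((0:ℕ) : Fin (m+3)) by simp,
      cast_inj_of_lt (by omega) hb']
    omega
  · rw [cast_n_eq_zero (m := m), show (0 : Fin (m+3)) = ((0:ℕ) : Fin (m+3)) by simp,
      cast_inj_of_lt ha' (by omega)]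
    omega
  · rw [cast_inj_of_lt ha' hb']
    omega

lemma cast_ne_cast {a b : ℕ} (ha : a ≤ m + 3) (hb : b ≤ m + 3)
    (h1 : a ≠ b) (h2 : ¬(a = 0 ∧ b = m + 3)) (h3 : ¬(a = m + 3 ∧ b = 0)) :
    ((a : ℕ) : Fin (m+3)) ≠ ((b : ℕ) : Fin (m+3)) := by
  rw [Ne, cast_eq_cast_iff ha hb]
  tauto

/-- unprotected-neighbour set: only the left neighbour is unprotected. -/
lemma unprot_eq_left {d : ℕ} (t : ℕ → Fin d → Fin (m+3)) (s : ℕ) {a al ar : ℕ}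
    (hl : ((al : ℕ) : Fin (m+3)) = ((a : ℕ) : Fin (m+3)) - 1)
    (hr : ((ar : ℕ) : Fin (m+3)) = ((a : ℕ) : Fin (m+3)) + 1)
    (hls : ((al : ℕ) : Fin (m+3)) ∉ protectedSet t s)
    (hrs : ((ar : ℕ) : Fin (m+3)) ∈ protectedSet t s) :
    unprotNbrs (SimpleGraph.cycleGraph (m+3)) t s ((a : ℕ) : Fin (m+3)) =
      {((al : ℕ) : Fin (m+3))} := by
  rw [unprotNbrs_cycle_eq t s a al ar hl hr]
  ext u
  simp only [Set.mem_setOf_eq, Set.mem_singleton_iff]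
  constructor
  · rintro (⟨rfl, -⟩ | ⟨rfl, h⟩)
    · rfl
    · exact absurd hrs h
  · rintro rfl; exact Or.inl ⟨rfl, hls⟩

/-- unprotected-neighbour set: only the right neighbour is unprotected. -/
lemma unprot_eq_right {d : ℕ} (t : ℕ → Fin d → Fin (m+3)) (s : ℕ) {a al ar : ℕ}
    (hl : ((al : ℕ) : Fin (m+3)) = ((a : ℕ) : Fin (m+3)) - 1)
    (hr : ((ar : ℕ) : Fin (m+3)) = ((a : ℕ) : Fin (m+3)) + 1)
    (hls : ((al : ℕ) : Fin (m+3)) ∈ protectedSet t s)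
    (hrs : ((ar : ℕ) : Fin (m+3)) ∉ protectedSet t s) :
    unprotNbrs (SimpleGraph.cycleGraph (m+3)) t s ((a : ℕ) : Fin (m+3)) =
      {((ar : ℕ) : Fin (m+3))} := by
  rw [unprotNbrs_cycle_eq t s a al ar hl hr]
  ext u
  simp only [Set.mem_setOf_eq, Set.mem_singleton_iff]
  constructor
  · rintro (⟨rfl, h⟩ | ⟨rfl, -⟩)
    · exact absurd hls h
    · rfl
  · rintro rfl; exact Or.inr ⟨rfl, hrs⟩

/-- unprotected-neighbour set: both neighbours protected. -/
lemma unprot_eq_empty {d : ℕ} (t : ℕ → Fin d → Fin (m+3)) (s : ℕ) {a al ar : ℕ}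
    (hl : ((al : ℕ) : Fin (m+3)) = ((a : ℕ) : Fin (m+3)) - 1)
    (hr : ((ar : ℕ) : Fin (m+3)) = ((a : ℕ) : Fin (m+3)) + 1)
    (hls : ((al : ℕ) : Fin (m+3)) ∈ protectedSet t s)
    (hrs : ((ar : ℕ) : Fin (m+3)) ∈ protectedSet t s) :
    unprotNbrs (SimpleGraph.cycleGraph (m+3)) t s ((a : ℕ) : Fin (m+3)) = ∅ := by
  rw [unprotNbrs_cycle_eq t s a al ar hl hr]
  ext u
  simp only [Set.mem_setOf_eq, Set.mem_empty_iff_false, iff_false]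
  rintro (⟨rfl, h⟩ | ⟨rfl, h⟩)
  · exact h hls
  · exact h hrs

/-- unprotected-neighbour set: both neighbours unprotected. -/
lemma unprot_eq_pair {d : ℕ} (t : ℕ → Fin d → Fin (m+3)) (s : ℕ) {a al ar : ℕ}
    (hl : ((al : ℕ) : Fin (m+3)) = ((a : ℕ) : Fin (m+3)) - 1)
    (hr : ((ar : ℕ) : Fin (m+3)) = ((a : ℕ) : Fin (m+3)) + 1)
    (hls : ((al : ℕ) : Fin (m+3)) ∉ protectedSet t s)
    (hrs : ((ar : ℕ) : Fin (m+3)) ∉ protectedSet t s) :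
    unprotNbrs (SimpleGraph.cycleGraph (m+3)) t s ((a : ℕ) : Fin (m+3)) =
      {((al : ℕ) : Fin (m+3)), ((ar : ℕ) : Fin (m+3))} := by
  rw [unprotNbrs_cycle_eq t s a al ar hl hr]
  ext u
  simp only [Set.mem_setOf_eq, Set.mem_insert_iff, Set.mem_singleton_iff]
  constructor
  · rintro (⟨rfl, -⟩ | ⟨rfl, -⟩)
    · exact Or.inl rfl
    · exact Or.inr rfl
  · rintro (rfl | rfl)
    · exact Or.inl ⟨rfl, hls⟩
    · exact Or.inr ⟨rfl, hrs⟩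

/-- Obligation in the situation where the searchers on `v` must stay because
there are two unprotected neighbours but at most one mobile searcher on `v`. -/
lemma oblig_of_two_unprot {d k : ℕ} {t : ℕ → Fin d → Fin (m+3)} {s : ℕ} {a al ar : ℕ}
    (hl : ((al : ℕ) : Fin (m+3)) = ((a : ℕ) : Fin (m+3)) - 1)
    (hr : ((ar : ℕ) : Fin (m+3)) = ((a : ℕ) : Fin (m+3)) + 1)
    (hlr : ((al : ℕ) : Fin (m+3)) ≠ ((ar : ℕ) : Fin (m+3)))
    (hls : ((al : ℕ) : Fin (m+3)) ∉ protectedSet t s)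
    (hrs : ((ar : ℕ) : Fin (m+3)) ∉ protectedSet t s)
    {j : Fin d} (hocc : ∀ i, t s i = ((a : ℕ) : Fin (m+3)) → i = j)
    (hstay : ∀ i, t s i = ((a : ℕ) : Fin (m+3)) → t (s+1) i = t s i) :
    Oblig (SimpleGraph.cycleGraph (m+3)) k t s ((a : ℕ) : Fin (m+3)) := by
  refine oblig_of_stay (Or.inr ?_) hstay
  rw [unprot_eq_pair t s hl hr hls hrs]
  have h2 : ({((al : ℕ) : Fin (m+3)), ((ar : ℕ) : Fin (m+3))} : Set (Fin (m+3))).ncard = 2 :=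
    Set.ncard_pair hlr
  have h1 : (mobileOn k t s ((a : ℕ) : Fin (m+3))).ncard ≤ 1 := by
    have hsub : mobileOn k t s ((a : ℕ) : Fin (m+3)) ⊆ {j} := by
      rintro i ⟨hi, -⟩
      exact hocc i hi
    calc _ ≤ ({j} : Set (Fin d)).ncard := Set.ncard_le_ncard hsub (Set.toFinite _)
      _ = 1 := Set.ncard_singleton _
  omega

end CastFin2


/-! ### The successful play with two searchers (`n ≤ 2k + 2`) -/

section CaseB
variable {m : ℕ} (L : ℕ)

/-- Two searchers start on vertices `0` and `1`; searcher `0` sweeps `L` steps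
leftwards (downwards mod `n`) and searcher `1` sweeps `L` steps rightwards. -/
def tB (m L : ℕ) : ℕ → Fin 2 → Fin (m+3) :=
  fun s i => if i = 0 then ((m + 3 - min s L : ℕ) : Fin (m+3))
    else ((1 + min s L : ℕ) : Fin (m+3))

lemma tB_zero (s : ℕ) : tB m L s 0 = ((m + 3 - min s L : ℕ) : Fin (m+3)) := rfl

lemma tB_one (s : ℕ) : tB m L s 1 = ((1 + min s L : ℕ) : Fin (m+3)) := rfl

lemma fin2_cases (i : Fin 2) : i = 0 ∨ i = 1 := by revert i; decide

variable (hL1 : 1 ≤ L) (hLm : m + 1 ≤ 2 * L) (hLm' : 2 * L ≤ m + 2)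

/-- Description of the protected set for `tB`. -/
def PB (m L s : ℕ) : Set ℕ :=
  {w | w = 0 ∨ (m + 3 - min s L ≤ w ∧ w ≤ m + 2) ∨ (1 ≤ w ∧ w ≤ 1 + min s L)}

include hLm' in
lemma protB (s : ℕ) :
    protectedSet (tB m L) s = (fun w : ℕ => ((w : ℕ) : Fin (m+3))) '' PB m L s := by
  ext v
  constructor
  · rintro ⟨i, s', hs', rfl⟩
    rcases fin2_cases i with rfl | rfl
    · rw [tB_zero]
      by_cases h0 : min s' L = 0
      · refine ⟨0, Or.inl rfl, ?_⟩
        rw [h0]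
        simp [cast_n_eq_zero]
      · refine ⟨m + 3 - min s' L, Or.inr (Or.inl ⟨?_, by omega⟩), rfl⟩
        have : min s' L ≤ min s L := by omega
        omega
    · rw [tB_one]
      refine ⟨1 + min s' L, Or.inr (Or.inr ⟨by omega, ?_⟩), rfl⟩
      have : min s' L ≤ min s L := by omega
      omega
  · rintro ⟨w, hw, rfl⟩
    rcases hw with rfl | hw | hw
    · exact ⟨0, 0, Nat.zero_le s, by rw [tB_zero]; simp [cast_n_eq_zero]⟩
    · refine ⟨0, m + 3 - w, ?_, ?_⟩
      · have : min s L ≤ s := by omega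
        omega
      · rw [tB_zero]
        have he : m + 3 - min (m + 3 - w) L = w := by omega
        rw [he]
    · refine ⟨1, w - 1, ?_, ?_⟩
      · have : min s L ≤ s := by omega
        omega
      · rw [tB_one]
        have he : 1 + min (w - 1) L = w := by omega
        rw [he]

include hLm' in
lemma protB_mem (s : ℕ) {w : ℕ} (hw : w < m + 3) :
    ((w : ℕ) : Fin (m+3)) ∈ protectedSet (tB m L) s ↔
      (w = 0 ∨ (m + 3 - min s L ≤ w ∧ w ≤ m + 2) ∨ (1 ≤ w ∧ w ≤ 1 + min s L)) := by
  rw [protB L hLm' s]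
  exact mem_cast_image (fun x hx => by
    rcases hx with rfl | hx | hx <;> omega) hw

include hLm' in
lemma movesB (i : Fin 2) (s : ℕ) : movesBefore (tB m L) i s = min s L := by
  have h := movesBefore_ramp (t := tB m L) (i := i) (b := 0) (L := L) ?_ s
  · rw [h]; omega
  · intro s'
    constructor
    · intro hne
      by_contra hc
      apply hne
      have h1 : min (s' + 1) L = min s' L := by omega
      rcases fin2_cases i with rfl | rfl
      · rw [tB_zero, tB_zero, h1]
      · rw [tB_one, tB_one, h1]
    · intro hs'
      have h1 : min (s' + 1) L = s' + 1 := by omega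
      have h2 : min s' L = s' := by omega
      rcases fin2_cases i with rfl | rfl
      · rw [tB_zero, tB_zero, h1, h2]
        exact cast_ne_cast (by omega) (by omega) (by omega) (by omega) (by omega)
      · rw [tB_one, tB_one, h1, h2]
        exact cast_ne_cast (by omega) (by omega) (by omega) (by omega) (by omega)

include hL1 hLm hLm' in
lemma obligB {k : ℕ} (hLk : L ≤ k) (s : ℕ) (v : Fin (m+3)) :
    Oblig (SimpleGraph.cycleGraph (m+3)) k (tB m L) s v := by
  by_cases hs : s < L
  · -- Phase I : both searchers sweeping
    have h2 : min s L = s := by omega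
    by_cases h0 : v = tB m L s 0
    · -- searcher 0's vertex
      have hpos : v = ((m + 3 - s : ℕ) : Fin (m+3)) := by rw [h0, tB_zero, h2]
      -- right neighbour is protected
      have hprev : ((m + 3 - s + 1 : ℕ) : Fin (m+3)) ∈ protectedSet (tB m L) s := by
        by_cases hs0 : s = 0
        · subst hs0
          have he : ((m + 3 - 0 + 1 : ℕ) : Fin (m+3)) = tB m L 0 1 := by
            rw [tB_one]
            have : (m + 3 - 0 + 1 : ℕ) = (m + 3) + 1 := by omega
            rw [this, Nat.cast_add, cast_n_eq_zero]
            simp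
          rw [he]
          exact mem_prot _ (le_refl 0) 1
        · have he : tB m L (s - 1) 0 = ((m + 3 - s + 1 : ℕ) : Fin (m+3)) := by
            rw [tB_zero]
            have : m + 3 - min (s - 1) L = m + 3 - s + 1 := by omega
            rw [this]
          rw [← he]
          exact mem_prot _ (by omega) 0
      -- left neighbour is unprotected
      have hlft : ((m + 2 - s : ℕ) : Fin (m+3)) ∉ protectedSet (tB m L) s := by
        rw [protB_mem L hLm' s (by omega)]
        omega
      have hunp : unprotNbrs (SimpleGraph.cycleGraph (m+3)) (tB m L) s v =
          {((m + 2 - s : ℕ) : Fin (m+3))} := by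
        rw [hpos]
        refine unprot_eq_left _ _ ?_ ?_ hlft hprev
        · have : (m + 2 - s : ℕ) = (m + 3 - s) - 1 := by omega
          rw [this]
          exact cast_pred (by omega)
        · exact cast_succ _
      have hmob : mobileOn k (tB m L) s v = {0} := by
        ext i
        simp only [mobileOn, Set.mem_setOf_eq, Set.mem_singleton_iff]
        constructor
        · rintro ⟨hiv, -⟩
          rcases fin2_cases i with rfl | rfl
          · rfl
          · exfalso
            rw [tB_one, h2, hpos] at hiv
            exact cast_ne_cast (by omega) (by omega) (by omega) (by omega) (by omega) hiv
        · rintro rfl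
          refine ⟨h0.symm, ?_⟩
          rw [movesB L hLm']
          omega
      refine oblig_of_move hunp hmob ?_
      rw [tB_zero]
      have : min (s + 1) L = s + 1 := by omega
      rw [this]
      have : m + 3 - (s + 1) = m + 2 - s := by omega
      rw [this]
    · by_cases h1 : v = tB m L s 1
      · -- searcher 1's vertex
        have hpos : v = ((1 + s : ℕ) : Fin (m+3)) := by rw [h1, tB_one, h2]
        have hprev : ((s : ℕ) : Fin (m+3)) ∈ protectedSet (tB m L) s := by
          by_cases hs0 : s = 0
          · subst hs0
            have he : ((0 : ℕ) : Fin (m+3)) = tB m L 0 0 := by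
              rw [tB_zero]
              simp [cast_n_eq_zero]
            rw [he]
            exact mem_prot _ (le_refl 0) 0
          · have he : tB m L (s - 1) 1 = ((s : ℕ) : Fin (m+3)) := by
              rw [tB_one]
              have : 1 + min (s - 1) L = s := by omega
              rw [this]
            rw [← he]
            exact mem_prot _ (by omega) 1
        have hrgt : ((2 + s : ℕ) : Fin (m+3)) ∉ protectedSet (tB m L) s := by
          rw [protB_mem L hLm' s (by omega)]
          omega
        have hunp : unprotNbrs (SimpleGraph.cycleGraph (m+3)) (tB m L) s v =
            {((2 + s : ℕ) : Fin (m+3))} := by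
          rw [hpos]
          refine unprot_eq_right _ _ ?_ ?_ hprev hrgt
          · convert cast_pred (m := m) (a := 1 + s) (by omega) using 2
            omega
          · have : (2 + s : ℕ) = (1 + s) + 1 := by omega
            rw [this]
            exact cast_succ _
        have hmob : mobileOn k (tB m L) s v = {1} := by
          ext i
          simp only [mobileOn, Set.mem_setOf_eq, Set.mem_singleton_iff]
          constructor
          · rintro ⟨hiv, -⟩
            rcases fin2_cases i with rfl | rfl
            · exfalso
              rw [tB_zero, h2, hpos] at hiv
              exact cast_ne_cast (by omega) (by omega) (by omega) (by omega) (by omega) hiv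
            · rfl
          · rintro rfl
            refine ⟨h1.symm, ?_⟩
            rw [movesB L hLm']
            omega
        refine oblig_of_move hunp hmob ?_
        rw [tB_one]
        have : min (s + 1) L = s + 1 := by omega
        rw [this]
        have : 1 + (s + 1) = 2 + s := by omega
        rw [this]
      · -- no searcher here
        refine oblig_of_none ?_
        intro i
        rcases fin2_cases i with rfl | rfl
        · exact fun h => h0 h.symm
        · exact fun h => h1 h.symm
  · -- Phase II : everything is protected around the searchers; they all stay
    have h2 : min s L = L := by omega
    have hstay : ∀ i, tB m L (s + 1) i = tB m L s i := by
      intro i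
      have h3 : min (s + 1) L = min s L := by omega
      rcases fin2_cases i with rfl | rfl
      · rw [tB_zero, tB_zero, h3]
      · rw [tB_one, tB_one, h3]
    by_cases h0 : v = tB m L s 0
    · have hpos : v = ((m + 3 - L : ℕ) : Fin (m+3)) := by rw [h0, tB_zero, h2]
      have hlft : ((m + 2 - L : ℕ) : Fin (m+3)) ∈ protectedSet (tB m L) s := by
        rw [protB_mem L hLm' s (by omega)]
        omega
      have hrgt : ((m + 3 - L + 1 : ℕ) : Fin (m+3)) ∈ protectedSet (tB m L) s := by
        have he : tB m L (L - 1) 0 = ((m + 3 - L + 1 : ℕ) : Fin (m+3)) := by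
          rw [tB_zero]
          have : m + 3 - min (L - 1) L = m + 3 - L + 1 := by omega
          rw [this]
        rw [← he]
        exact mem_prot _ (by omega) 0
      have hunp : unprotNbrs (SimpleGraph.cycleGraph (m+3)) (tB m L) s v = ∅ := by
        rw [hpos]
        refine unprot_eq_empty _ _ ?_ ?_ hlft hrgt
        · have : (m + 2 - L : ℕ) = (m + 3 - L) - 1 := by omega
          rw [this]
          exact cast_pred (by omega)
        · exact cast_succ _
      exact oblig_of_stay (Or.inl hunp) (fun i hi => hstay i)
    · by_cases h1 : v = tB m L s 1
      · have hpos : v = ((1 + L : ℕ) : Fin (m+3)) := by rw [h1, tB_one, h2]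
        have hlft : ((L : ℕ) : Fin (m+3)) ∈ protectedSet (tB m L) s := by
          rw [protB_mem L hLm' s (by omega)]
          omega
        have hrgt : ((2 + L : ℕ) : Fin (m+3)) ∈ protectedSet (tB m L) s := by
          rcases (by omega : 2 + L < m + 3 ∨ 2 + L = m + 3) with hc | hc
          · rw [protB_mem L hLm' s hc]
            omega
          · rw [hc, cast_n_eq_zero]
            have : ((0 : ℕ) : Fin (m+3)) ∈ protectedSet (tB m L) s := by
              rw [protB_mem L hLm' s (by omega)]
              omega
            simpa using this
        have hunp : unprotNbrs (SimpleGraph.cycleGraph (m+3)) (tB m L) s v = ∅ := by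
          rw [hpos]
          refine unprot_eq_empty _ _ ?_ ?_ hlft hrgt
          · convert cast_pred (m := m) (a := 1 + L) (by omega) using 2
            omega
          · have : (2 + L : ℕ) = (1 + L) + 1 := by omega
            rw [this]
            exact cast_succ _
        exact oblig_of_stay (Or.inl hunp) (fun i hi => hstay i)
      · refine oblig_of_none ?_
        intro i
        rcases fin2_cases i with rfl | rfl
        · exact fun h => h0 h.symm
        · exact fun h => h1 h.symm

include hL1 hLm hLm' in
lemma validB {k : ℕ} (hLk : L ≤ k) : ValidPlay (SimpleGraph.cycleGraph (m+3)) k (tB m L) := by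
  rw [validPlay_iff]
  refine ⟨?_, ?_, obligB L hL1 hLm hLm' hLk⟩
  · intro i s
    by_cases hs : s < L
    · right
      have h1 : min (s + 1) L = s + 1 := by omega
      have h2 : min s L = s := by omega
      rcases fin2_cases i with rfl | rfl
      · rw [tB_zero, tB_zero, h1, h2]
        have := adj_cast_pred (m := m) (a := m + 3 - s) (by omega)
        have he : m + 3 - s - 1 = m + 3 - (s + 1) := by omega
        rwa [he] at this
      · rw [tB_one, tB_one, h1, h2]
        have := adj_cast_succ (m := m) (1 + s)
        have he : 1 + s + 1 = 1 + (s + 1) := by omega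
        rwa [he] at this
    · left
      have h1 : min (s + 1) L = min s L := by omega
      rcases fin2_cases i with rfl | rfl
      · rw [tB_zero, tB_zero, h1]
      · rw [tB_one, tB_one, h1]
  · intro i s
    rw [movesB L hLm' i s]
    omega

include hLm hLm' in
lemma covB : ∀ v : Fin (m+3), ∃ i s, tB m L s i = v := by
  intro v
  have hv : ((v.val : ℕ) : Fin (m+3)) = v := Fin.cast_val_eq_self v
  have hvlt := v.isLt
  have hmem : ((v.val : ℕ) : Fin (m+3)) ∈ protectedSet (tB m L) L := by
    rw [protB_mem L hLm' L (by omega)]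
    omega
  obtain ⟨i, s', hs', he⟩ := hmem
  exact ⟨i, s', by rw [he, hv]⟩

end CaseB

/-- The successful play with two searchers when `n ≤ 2k+2`. -/
lemma successful_two {k m : ℕ} (hk : 2 ≤ k) (hnk : m + 3 ≤ 2 * k + 2) :
    ∃ t : ℕ → Fin 2 → Fin (m+3), Successful (SimpleGraph.cycleGraph (m+3)) k t := by
  refine ⟨tB m ((m + 2) / 2), ?_, ?_⟩
  · exact validB _ (by omega) (by omega) (by omega) (by omega)
  · exact covB _ (by omega) (by omega)



/-! ### The successful play with `d` searchers (`n ≥ 2k + 2`) -/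

section CaseA
variable {m : ℕ}

/-- Activation stage of searcher `j` (for `1 ≤ j ≤ d-1`). -/
def bA (R d k j : ℕ) : ℕ := R - (d - j) * k

/-- Sweep length of searcher `j` (for `1 ≤ j ≤ d-1`). -/
def lA (R d k j : ℕ) : ℕ := min k (R - (d - 1 - j) * k)

/-- The cascade play: searcher `0` starts at vertex `0` and sweeps `k` steps
leftwards; searcher `j ≥ 1` starts at `j + bA j`, waits until stage `bA j`,
then sweeps `lA j` steps rightwards. -/
def tA (m R d k : ℕ) : ℕ → Fin d → Fin (m+3) :=
  fun s i => if i.val = 0 then ((m + 3 - min s k : ℕ) : Fin (m+3))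
    else ((i.val + bA R d k i.val + min (s - bA R d k i.val) (lA R d k i.val) : ℕ) : Fin (m+3))

variable {R d k : ℕ}

lemma bA_mono (R d k : ℕ) {j1 j2 : ℕ} (h : j1 ≤ j2) : bA R d k j1 ≤ bA R d k j2 :=
  Nat.sub_le_sub_left (Nat.mul_le_mul_right k (Nat.sub_le_sub_left h d)) R

lemma bA_succ (R d k : ℕ) {j : ℕ} (hj : j ≤ d - 1) (hd : 1 ≤ d) :
    bA R d k j + lA R d k j = bA R d k (j + 1) := by
  unfold bA lA
  have h1 : d - j = (d - 1 - j) + 1 := by omega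
  have h2 : d - (j + 1) = d - 1 - j := by omega
  rw [h1, h2, add_mul, one_mul]
  generalize (d - 1 - j) * k = B
  omega

lemma bA_last (R d k : ℕ) : bA R d k d = R := by
  unfold bA
  simp

lemma bA_d1 (R d k : ℕ) (hd : 1 ≤ d) : bA R d k (d - 1) = R - k := by
  unfold bA
  have : d - (d - 1) = 1 := by omega
  rw [this, one_mul]

lemma lA_last (R d k : ℕ) (hR : k ≤ R) (hd : 1 ≤ d) : lA R d k (d - 1) = k := by
  unfold lA
  have : d - 1 - (d - 1) = 0 := by omega
  rw [this, zero_mul]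
  omega

lemma bA_one (hRd : R ≤ (d - 1) * k) : bA R d k 1 = 0 := by
  unfold bA
  have : (d - 1) * k ≤ (d - 1) * k := le_refl _
  have h1 : d - 1 ≤ d - 1 := le_refl _
  omega

lemma lA_zero_bA {j : ℕ} (hk : 1 ≤ k) (h : lA R d k j = 0) : bA R d k j = 0 := by
  unfold lA at h
  unfold bA
  have h2 : (d - 1 - j) * k ≤ (d - j) * k :=
    Nat.mul_le_mul_right k (by omega)
  omega

lemma bA_eq_zero_of_eq {i j : ℕ} (hk : 1 ≤ k) (hi : 1 ≤ i) (hij : i < j) (hj : j ≤ d - 1)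
    (h : bA R d k i = bA R d k j) : bA R d k j = 0 := by
  have h1 := bA_succ R d k (j := i) (by omega) (by omega)
  have h2 := bA_mono R d k (j1 := i + 1) (j2 := j) (by omega)
  have h3 : lA R d k i = 0 := by omega
  have h4 := lA_zero_bA hk h3
  omega

/-- Top of searcher `j`'s sweep range is at most `m + 2 - k`. -/
lemma top_le (hR : k ≤ R) (hd : 2 ≤ d) (hm : m + 3 = R + d + k)
    {j : ℕ} (hj1 : 1 ≤ j) (hj2 : j ≤ d - 1) :
    j + bA R d k j + lA R d k j ≤ m + 2 - k := by
  have h1 := bA_succ R d k hj2 (by omega)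
  have h2 := bA_mono R d k (j1 := j + 1) (j2 := d) (by omega)
  have h3 := bA_last R d k
  omega

/-- Interval gap: searcher `j1`'s range lies strictly below searcher `j2`'s start. -/
lemma gapA (hk : 1 ≤ k) {j1 j2 : ℕ} (hj1 : 1 ≤ j1) (h12 : j1 < j2) (hj2 : j2 ≤ d - 1) :
    j1 + bA R d k j1 + lA R d k j1 < j2 + bA R d k j2 := by
  have h1 := bA_succ R d k (j := j1) (by omega) (by omega)
  have h2 := bA_mono R d k (j1 := j1 + 1) (j2 := j2) (by omega)
  omega

end CaseA


section CaseA2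
variable {m R d k : ℕ}

lemma tA_zero (s : ℕ) (i : Fin d) (hi : i.val = 0) :
    tA m R d k s i = ((m + 3 - min s k : ℕ) : Fin (m+3)) := by
  simp [tA, hi]

lemma tA_pos (s : ℕ) (i : Fin d) (hi : i.val ≠ 0) :
    tA m R d k s i = ((i.val + bA R d k i.val +
      min (s - bA R d k i.val) (lA R d k i.val) : ℕ) : Fin (m+3)) := by
  simp [tA, hi]

/-- Description of the protected set for `tA`. -/
def PA (m R d k s : ℕ) : Set ℕ :=
  {w | w = 0 ∨ (m + 3 - min s k ≤ w ∧ w ≤ m + 2) ∨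
    ∃ j, 1 ≤ j ∧ j ≤ d - 1 ∧ j + bA R d k j ≤ w ∧
      w ≤ j + bA R d k j + min (s - bA R d k j) (lA R d k j)}

variable (hk : 2 ≤ k) (hR : k ≤ R) (hd : 2 ≤ d) (hm : m + 3 = R + d + k)

include hk hR hd hm in
lemma protA (s : ℕ) :
    protectedSet (tA m R d k) s = (fun w : ℕ => ((w : ℕ) : Fin (m+3))) '' PA m R d k s := by
  ext v
  constructor
  · rintro ⟨i, s', hs', rfl⟩
    by_cases hi : i.val = 0
    · rw [tA_zero s' i hi]
      by_cases h0 : min s' k = 0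
      · refine ⟨0, Or.inl rfl, ?_⟩
        rw [h0]
        simp [cast_n_eq_zero]
      · refine ⟨m + 3 - min s' k, Or.inr (Or.inl ⟨?_, by omega⟩), rfl⟩
        have : min s' k ≤ min s k := by omega
        omega
    · rw [tA_pos s' i hi]
      refine ⟨i.val + bA R d k i.val + min (s' - bA R d k i.val) (lA R d k i.val),
        Or.inr (Or.inr ⟨i.val, by omega, ?_, by omega, ?_⟩), rfl⟩
      · have := i.isLt
        omega
      · have : min (s' - bA R d k i.val) (lA R d k i.val) ≤
            min (s - bA R d k i.val) (lA R d k i.val) := by omega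
        omega
  · rintro ⟨w, hw, rfl⟩
    rcases hw with rfl | hw | ⟨j, hj1, hj2, hlo, hhi⟩
    · refine ⟨⟨0, by omega⟩, 0, Nat.zero_le s, ?_⟩
      rw [tA_zero 0 _ rfl]
      simp [cast_n_eq_zero]
    · refine ⟨⟨0, by omega⟩, m + 3 - w, by omega, ?_⟩
      rw [tA_zero _ _ rfl]
      have he : m + 3 - min (m + 3 - w) k = w := by omega
      rw [he]
    · refine ⟨⟨j, by omega⟩, min s (bA R d k j + (w - (j + bA R d k j))), min_le_left _ _, ?_⟩
      rw [tA_pos _ _ (by simpa using (by omega : j ≠ 0))]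
      simp only
      have he : j + bA R d k j +
          min (min s (bA R d k j + (w - (j + bA R d k j))) - bA R d k j) (lA R d k j) = w := by
        omega
      rw [he]

include hk hR hd hm in
lemma protA_mem (s : ℕ) {w : ℕ} (hw : w < m + 3) :
    ((w : ℕ) : Fin (m+3)) ∈ protectedSet (tA m R d k) s ↔ w ∈ PA m R d k s := by
  rw [protA hk hR hd hm s]
  refine mem_cast_image (fun x hx => ?_) hw
  rcases hx with rfl | hx | ⟨j, hj1, hj2, hlo, hhi⟩
  · omega
  · omega
  · have ht := top_le hR hd hm hj1 hj2
    omega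

include hk hR hd hm in
lemma movesA_zero (i : Fin d) (hi : i.val = 0) (s : ℕ) :
    movesBefore (tA m R d k) i s = min s k := by
  have h := movesBefore_ramp (t := tA m R d k) (i := i) (b := 0) (L := k) ?_ s
  · rw [h]; omega
  · intro s'
    rw [tA_zero _ _ hi, tA_zero _ _ hi]
    constructor
    · intro hne
      by_contra hc
      apply hne
      have h1 : min (s' + 1) k = min s' k := by omega
      rw [h1]
    · intro hs'
      have h1 : min (s' + 1) k = s' + 1 := by omega
      have h2 : min s' k = s' := by omega
      rw [h1, h2]
      exact cast_ne_cast (by omega) (by omega) (by omega) (by omega) (by omega)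

include hk hR hd hm in
lemma movesA_pos (i : Fin d) (hi : i.val ≠ 0) (s : ℕ) :
    movesBefore (tA m R d k) i s = min (s - bA R d k i.val) (lA R d k i.val) := by
  have hj2 : i.val ≤ d - 1 := by have := i.isLt; omega
  have htop := top_le hR hd hm (by omega : 1 ≤ i.val) hj2
  exact movesBefore_ramp (t := tA m R d k) (i := i) (b := bA R d k i.val)
    (L := lA R d k i.val) (fun s' => by
      rw [tA_pos _ _ hi, tA_pos _ _ hi]
      constructor
      · intro hne
        by_contra hc
        apply hne
        have h1 : min (s' + 1 - bA R d k i.val) (lA R d k i.val) =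
            min (s' - bA R d k i.val) (lA R d k i.val) := by omega
        rw [h1]
      · intro hs'
        have h1 : min (s' + 1 - bA R d k i.val) (lA R d k i.val) = s' + 1 - bA R d k i.val := by
          omega
        have h2 : min (s' - bA R d k i.val) (lA R d k i.val) = s' - bA R d k i.val := by omega
        rw [h1, h2]
        exact cast_ne_cast (by omega) (by omega) (by omega) (by omega) (by omega)) s

include hk hR hd hm in
/-- Distinct searchers occupy distinct vertices. -/
lemma tA_ne (s : ℕ) {i i' : Fin d} (h : i.val < i'.val) :
    tA m R d k s i ≠ tA m R d k s i' := by
  have hi' : i'.val ≠ 0 := by omega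
  have hj2 : i'.val ≤ d - 1 := by have := i'.isLt; omega
  have htop' := top_le hR hd hm (by omega : 1 ≤ i'.val) hj2
  rw [tA_pos _ _ hi']
  by_cases hi : i.val = 0
  · rw [tA_zero _ _ hi]
    exact cast_ne_cast (by omega) (by omega) (by omega) (by omega) (by omega)
  · rw [tA_pos _ _ hi]
    have hgap := gapA (R := R) (by omega : 1 ≤ k) (by omega : 1 ≤ i.val) h hj2
    have htop := top_le hR hd hm (by omega : 1 ≤ i.val) (by omega)
    exact cast_ne_cast (by omega) (by omega) (by omega) (by omega) (by omega)

end CaseA2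


section CaseA3
variable {m R d k : ℕ}
variable (hk : 2 ≤ k) (hR : k ≤ R) (hd : 2 ≤ d) (hRd : R ≤ (d - 1) * k)
  (hm : m + 3 = R + d + k)

include hk hR hd hRd hm in
lemma obligA (s : ℕ) (v : Fin (m+3)) :
    Oblig (SimpleGraph.cycleGraph (m+3)) k (tA m R d k) s v := by
  by_cases hocc : ∃ i : Fin d, tA m R d k s i = v
  swap
  · push_neg at hocc
    exact oblig_of_none hocc
  obtain ⟨iv, hiv⟩ := hocc
  have huniq : ∀ i', tA m R d k s i' = v → i' = iv := by
    intro i' h'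
    by_contra hne
    have hvne : i'.val ≠ iv.val := fun hval => hne (Fin.ext hval)
    rcases Nat.lt_or_ge i'.val iv.val with hlt | hge
    · exact tA_ne hk hR hd hm s hlt (h'.trans hiv.symm)
    · exact tA_ne hk hR hd hm s (by omega) (hiv.trans h'.symm)
  by_cases hi0 : iv.val = 0
  · -- searcher 0
    by_cases hsk : s < k
    · -- sweeping phase of searcher 0
      have hpos : v = ((m + 3 - s : ℕ) : Fin (m+3)) := by
        rw [← hiv, tA_zero _ _ hi0]
        congr 1
        omega
      have hprev : ((m + 3 - s + 1 : ℕ) : Fin (m+3)) ∈ protectedSet (tA m R d k) s := by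
        by_cases hs0 : s = 0
        · subst hs0
          have hb1 := bA_one hRd
          have h5 : tA m R d k 0 ⟨1, by omega⟩ = ((1 : ℕ) : Fin (m+3)) := by
            rw [tA_pos _ _ (by simp)]
            congr 1
            simp only [hb1]
            omega
          have h6 : ((m + 3 - 0 + 1 : ℕ) : Fin (m+3)) = ((1 : ℕ) : Fin (m+3)) := by
            have h4 : (m + 3 - 0 + 1 : ℕ) = (m + 3) + 1 := by omega
            rw [h4, Nat.cast_add, cast_n_eq_zero, zero_add]
          have he : tA m R d k 0 ⟨1, by omega⟩ = ((m + 3 - 0 + 1 : ℕ) : Fin (m+3)) := by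
            rw [h5, h6]
          rw [← he]
          exact mem_prot _ (le_refl 0) _
        · have he : tA m R d k (s - 1) iv = ((m + 3 - s + 1 : ℕ) : Fin (m+3)) := by
            rw [tA_zero _ _ hi0]
            congr 1
            omega
          rw [← he]
          exact mem_prot _ (by omega) iv
      have hlft : ((m + 2 - s : ℕ) : Fin (m+3)) ∉ protectedSet (tA m R d k) s := by
        rw [protA_mem hk hR hd hm s (by omega)]
        rintro (h | h | ⟨j, hj1, hj2, hlo, hhi⟩)
        · omega
        · omega
        · have ht := top_le hR hd hm hj1 hj2
          omega
      have hunp : unprotNbrs (SimpleGraph.cycleGraph (m+3)) (tA m R d k) s v =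
          {((m + 2 - s : ℕ) : Fin (m+3))} := by
        rw [hpos]
        refine unprot_eq_left _ _ ?_ ?_ hlft hprev
        · convert cast_pred (m := m) (a := m + 3 - s) (by omega) using 2
          omega
        · exact cast_succ _
      have hmob : mobileOn k (tA m R d k) s v = {iv} := by
        ext i
        simp only [mobileOn, Set.mem_setOf_eq, Set.mem_singleton_iff]
        constructor
        · rintro ⟨hiv', -⟩
          exact huniq i hiv'
        · rintro rfl
          refine ⟨hiv, ?_⟩
          rw [movesA_zero hk hR hd hm _ hi0]
          omega
      refine oblig_of_move hunp hmob ?_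
      rw [tA_zero _ _ hi0]
      congr 1
      omega
    · -- searcher 0 has stopped
      have hpos : v = ((m + 3 - k : ℕ) : Fin (m+3)) := by
        rw [← hiv, tA_zero _ _ hi0]
        congr 1
        omega
      have hstay : ∀ i, tA m R d k s i = v → tA m R d k (s+1) i = tA m R d k s i := by
        intro i hi
        have : i = iv := huniq i hi
        subst this
        rw [tA_zero _ _ hi0, tA_zero _ _ hi0]
        congr 1
        omega
      have hprev : ((m + 3 - k + 1 : ℕ) : Fin (m+3)) ∈ protectedSet (tA m R d k) s := by
        have he : tA m R d k (k - 1) iv = ((m + 3 - k + 1 : ℕ) : Fin (m+3)) := by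
          rw [tA_zero _ _ hi0]
          congr 1
          omega
        rw [← he]
        exact mem_prot _ (by omega) iv
      have hb1 := bA_d1 R d k (by omega)
      have hl1 := lA_last R d k hR (by omega)
      by_cases hsR : R ≤ s
      · -- the meeting vertex is protected : all neighbours protected
        have hlft : ((m + 2 - k : ℕ) : Fin (m+3)) ∈ protectedSet (tA m R d k) s := by
          have he : tA m R d k s ⟨d - 1, by omega⟩ = ((m + 2 - k : ℕ) : Fin (m+3)) := by
            rw [tA_pos _ _ (by simp; omega)]
            simp only
            rw [hb1, hl1]
            congr 1
            omega
          rw [← he]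
          exact mem_prot _ (le_refl s) _
        have hunp : unprotNbrs (SimpleGraph.cycleGraph (m+3)) (tA m R d k) s v = ∅ := by
          rw [hpos]
          refine unprot_eq_empty _ _ ?_ ?_ hlft hprev
          · convert cast_pred (m := m) (a := m + 3 - k) (by omega) using 2
            omega
          · exact cast_succ _
        exact oblig_of_stay (Or.inl hunp) hstay
      · -- searcher 0 is stuck but immobile
        have hlft : ((m + 2 - k : ℕ) : Fin (m+3)) ∉ protectedSet (tA m R d k) s := by
          rw [protA_mem hk hR hd hm s (by omega)]
          rintro (h | h | ⟨j, hj1, hj2, hlo, hhi⟩)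
          · omega
          · omega
          · rcases (by omega : j = d - 1 ∨ j ≤ d - 2) with rfl | hj
            · rw [hb1, hl1] at hhi
              omega
            · have hstep : bA R d k j + lA R d k j = bA R d k (j + 1) := bA_succ R d k (by omega) (by omega)
              have hmono : bA R d k (j + 1) ≤ bA R d k (d - 1) := bA_mono R d k (by omega)
              omega
        have hunp : unprotNbrs (SimpleGraph.cycleGraph (m+3)) (tA m R d k) s v =
            {((m + 2 - k : ℕ) : Fin (m+3))} := by
          rw [hpos]
          refine unprot_eq_left _ _ ?_ ?_ hlft hprev
          · convert cast_pred (m := m) (a := m + 3 - k) (by omega) using 2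
            omega
          · exact cast_succ _
        have hmob : mobileOn k (tA m R d k) s v = ∅ := by
          ext i
          simp only [mobileOn, Set.mem_setOf_eq, Set.mem_empty_iff_false, iff_false]
          rintro ⟨hiv', hmb⟩
          have : i = iv := huniq i hiv'
          subst this
          rw [movesA_zero hk hR hd hm _ hi0] at hmb
          omega
        refine oblig_of_stay (Or.inr ?_) hstay
        rw [hunp, hmob, Set.ncard_empty, Set.ncard_singleton]
        omega
  · -- searcher j = iv.val ≥ 1
    have hj1 : 1 ≤ iv.val := by omega
    have hj2 : iv.val ≤ d - 1 := by have := iv.isLt; omega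
    have htop := top_le hR hd hm hj1 hj2
    have hb1 := bA_one hRd
    by_cases hph1 : s < bA R d k iv.val
    · -- waiting phase : two unprotected neighbours, must stay
      have hLpos : 0 < lA R d k iv.val := by
        by_contra h
        have := lA_zero_bA (by omega : 1 ≤ k) (by omega : lA R d k iv.val = 0)
        omega
      have hjge2 : 2 ≤ iv.val := by
        by_contra h
        have : iv.val = 1 := by omega
        rw [this] at hph1
        omega
      have hpos : v = ((iv.val + bA R d k iv.val : ℕ) : Fin (m+3)) := by
        rw [← hiv, tA_pos _ _ hi0]
        congr 1
        omega
      have hlft : ((iv.val + bA R d k iv.val - 1 : ℕ) : Fin (m+3)) ∉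
          protectedSet (tA m R d k) s := by
        rw [protA_mem hk hR hd hm s (by omega)]
        rintro (h | h | ⟨i, hi1, hi2, hlo, hhi⟩)
        · omega
        · omega
        · rcases (by omega : i < iv.val ∨ i = iv.val ∨ i > iv.val) with hc | rfl | hc
          · have hstep : bA R d k i + lA R d k i = bA R d k (i + 1) := bA_succ R d k (by omega) (by omega)
            have hmono : bA R d k (i + 1) ≤ bA R d k (iv.val) := bA_mono R d k (by omega)
            by_cases hbe : bA R d k i = bA R d k iv.val
            · have := bA_eq_zero_of_eq (by omega : 1 ≤ k) hi1 hc hj2 hbe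
              omega
            · have hmono2 : bA R d k (i) ≤ bA R d k (iv.val) := bA_mono R d k (by omega)
              rcases Nat.lt_or_ge s (bA R d k i) with hcc | hcc
              · omega
              · omega
          · omega
          · have hmono : bA R d k (iv.val) ≤ bA R d k (i) := bA_mono R d k (by omega)
            omega
      have hrgt : ((iv.val + bA R d k iv.val + 1 : ℕ) : Fin (m+3)) ∉
          protectedSet (tA m R d k) s := by
        rw [protA_mem hk hR hd hm s (by omega)]
        rintro (h | h | ⟨i, hi1, hi2, hlo, hhi⟩)
        · omega
        · omega
        · rcases (by omega : i < iv.val ∨ i = iv.val ∨ i > iv.val) with hc | rfl | hc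
          · have hstep : bA R d k i + lA R d k i = bA R d k (i + 1) := bA_succ R d k (by omega) (by omega)
            have hmono : bA R d k (i + 1) ≤ bA R d k (iv.val) := bA_mono R d k (by omega)
            omega
          · omega
          · have hgap : iv.val + bA R d k iv.val + lA R d k iv.val < i + bA R d k i :=
              gapA (by omega) hj1 hc (by omega)
            omega
      rw [hpos]
      refine oblig_of_two_unprot (t := tA m R d k) ?_ ?_ ?_ hlft hrgt (j := iv)
        (fun i hi => huniq i (by rw [hi, hpos])) ?_
      · convert cast_pred (m := m) (a := iv.val + bA R d k iv.val) (by omega) using 2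
      · exact cast_succ _
      · exact cast_ne_cast (by omega) (by omega) (by omega) (by omega) (by omega)
      · intro i hi
        have : i = iv := huniq i (by rw [hi, hpos])
        subst this
        rw [tA_pos _ _ hi0, tA_pos _ _ hi0]
        congr 1
        omega
    · by_cases hph2 : s < bA R d k iv.val + lA R d k iv.val
      · -- sweeping phase of searcher j
        have hpos : v = ((iv.val + bA R d k iv.val + (s - bA R d k iv.val) : ℕ) : Fin (m+3)) := by
          rw [← hiv, tA_pos _ _ hi0]
          congr 1
          omega
        have hlft : ((iv.val + bA R d k iv.val + (s - bA R d k iv.val) - 1 : ℕ) : Fin (m+3)) ∈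
            protectedSet (tA m R d k) s := by
          by_cases hsB : s = bA R d k iv.val
          · -- just activated : left neighbour was protected by searcher `j-1` (or vertex 0)
            by_cases hj1' : iv.val = 1
            · have h0 : ((0 : ℕ) : Fin (m+3)) ∈ protectedSet (tA m R d k) s := by
                rw [protA_mem hk hR hd hm s (by omega)]
                exact Or.inl rfl
              have he : (iv.val + bA R d k iv.val + (s - bA R d k iv.val) - 1 : ℕ) = 0 := by
                rw [hj1'] at hsB ⊢
                omega
              rw [he]
              exact h0
            · have hstep : bA R d k (iv.val - 1) + lA R d k (iv.val - 1) = bA R d k (iv.val - 1 + 1) :=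
                bA_succ R d k (by omega) (by omega)
              have he : tA m R d k s ⟨iv.val - 1, by omega⟩ =
                  ((iv.val + bA R d k iv.val + (s - bA R d k iv.val) - 1 : ℕ) : Fin (m+3)) := by
                rw [tA_pos _ _ (by simp; omega)]
                congr 1
                simp only
                have he2 : iv.val - 1 + 1 = iv.val := by omega
                rw [he2] at hstep
                omega
              rw [← he]
              exact mem_prot _ (le_refl s) _
          · -- own previous position
            have he : tA m R d k (s - 1) iv =
                ((iv.val + bA R d k iv.val + (s - bA R d k iv.val) - 1 : ℕ) : Fin (m+3)) := by
              rw [tA_pos _ _ hi0]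
              congr 1
              omega
            rw [← he]
            exact mem_prot _ (by omega) iv
        have hrgt : ((iv.val + bA R d k iv.val + (s - bA R d k iv.val) + 1 : ℕ) : Fin (m+3)) ∉
            protectedSet (tA m R d k) s := by
          rw [protA_mem hk hR hd hm s (by omega)]
          rintro (h | h | ⟨i, hi1, hi2, hlo, hhi⟩)
          · omega
          · omega
          · rcases (by omega : i < iv.val ∨ i = iv.val ∨ i > iv.val) with hc | rfl | hc
            · have hstep : bA R d k i + lA R d k i = bA R d k (i + 1) := bA_succ R d k (by omega) (by omega)
              have hmono : bA R d k (i + 1) ≤ bA R d k iv.val := bA_mono R d k (by omega)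
              omega
            · omega
            · have hgap : iv.val + bA R d k iv.val + lA R d k iv.val < i + bA R d k i :=
              gapA (by omega) hj1 hc (by omega)
              omega
        have hunp : unprotNbrs (SimpleGraph.cycleGraph (m+3)) (tA m R d k) s v =
            {((iv.val + bA R d k iv.val + (s - bA R d k iv.val) + 1 : ℕ) : Fin (m+3))} := by
          rw [hpos]
          refine unprot_eq_right _ _ ?_ ?_ hlft hrgt
          · convert cast_pred (m := m) (a := iv.val + bA R d k iv.val + (s - bA R d k iv.val))
              (by omega) using 2
          · exact cast_succ _
        have hmob : mobileOn k (tA m R d k) s v = {iv} := by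
          ext i
          simp only [mobileOn, Set.mem_setOf_eq, Set.mem_singleton_iff]
          constructor
          · rintro ⟨hiv', -⟩
            exact huniq i hiv'
          · intro hieq
            rw [hieq]
            refine ⟨hiv, ?_⟩
            rw [movesA_pos hk hR hd hm _ hi0]
            have hlk : lA R d k iv.val ≤ k := min_le_left _ _
            omega
        refine oblig_of_move hunp hmob ?_
        rw [tA_pos _ _ hi0]
        congr 1
        omega
      · -- searcher j has finished its sweep
        have hpos : v = ((iv.val + bA R d k iv.val + lA R d k iv.val : ℕ) : Fin (m+3)) := by
          rw [← hiv, tA_pos _ _ hi0]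
          congr 1
          omega
        have hstay : ∀ i, tA m R d k s i = v → tA m R d k (s+1) i = tA m R d k s i := by
          intro i hi
          have : i = iv := huniq i hi
          subst this
          rw [tA_pos _ _ hi0, tA_pos _ _ hi0]
          congr 1
          omega
        have hlft : ((iv.val + bA R d k iv.val + lA R d k iv.val - 1 : ℕ) : Fin (m+3)) ∈
            protectedSet (tA m R d k) s := by
          by_cases hL0 : lA R d k iv.val = 0
          · have hB0 := lA_zero_bA (by omega : 1 ≤ k) hL0
            by_cases hj1' : iv.val = 1
            · have he : (iv.val + bA R d k iv.val + lA R d k iv.val - 1 : ℕ) = 0 := by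
                rw [hj1'] at hB0 hL0 ⊢
                omega
              rw [he, protA_mem hk hR hd hm s (by omega)]
              exact Or.inl rfl
            · have hstep : bA R d k (iv.val - 1) + lA R d k (iv.val - 1) = bA R d k (iv.val - 1 + 1) :=
                bA_succ R d k (by omega) (by omega)
              have he2 : iv.val - 1 + 1 = iv.val := by omega
              rw [he2] at hstep
              have he : tA m R d k s ⟨iv.val - 1, by omega⟩ =
                  ((iv.val + bA R d k iv.val + lA R d k iv.val - 1 : ℕ) : Fin (m+3)) := by
                rw [tA_pos _ _ (by simp; omega)]
                congr 1
                simp only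
                omega
              rw [← he]
              exact mem_prot _ (le_refl s) _
          · have he : tA m R d k (bA R d k iv.val + lA R d k iv.val - 1) iv =
                ((iv.val + bA R d k iv.val + lA R d k iv.val - 1 : ℕ) : Fin (m+3)) := by
              rw [tA_pos _ _ hi0]
              congr 1
              omega
            rw [← he]
            exact mem_prot _ (by omega) iv
        have hrgt : ((iv.val + bA R d k iv.val + lA R d k iv.val + 1 : ℕ) : Fin (m+3)) ∈
            protectedSet (tA m R d k) s := by
          by_cases hjd : iv.val = d - 1
          · have hbd := bA_d1 R d k (by omega)
            have hld := lA_last R d k hR (by omega)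
            rw [protA_mem hk hR hd hm s (by omega)]
            refine Or.inr (Or.inl ?_)
            rw [hjd, hbd, hld] at hph2 ⊢
            omega
          · have hstep : bA R d k iv.val + lA R d k iv.val = bA R d k (iv.val + 1) :=
              bA_succ R d k (by omega) (by omega)
            have he : tA m R d k 0 ⟨iv.val + 1, by omega⟩ =
                ((iv.val + bA R d k iv.val + lA R d k iv.val + 1 : ℕ) : Fin (m+3)) := by
              rw [tA_pos _ _ (by simp)]
              congr 1
              simp only
              omega
            rw [← he]
            exact mem_prot _ (Nat.zero_le s) _
        have hunp : unprotNbrs (SimpleGraph.cycleGraph (m+3)) (tA m R d k) s v = ∅ := by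
          rw [hpos]
          refine unprot_eq_empty _ _ ?_ ?_ hlft hrgt
          · convert cast_pred (m := m) (a := iv.val + bA R d k iv.val + lA R d k iv.val)
              (by omega) using 2
          · exact cast_succ _
        exact oblig_of_stay (Or.inl hunp) hstay

end CaseA3

section CaseA4
variable {m R d k : ℕ}
variable (hk : 2 ≤ k) (hR : k ≤ R) (hd : 2 ≤ d) (hRd : R ≤ (d - 1) * k)
  (hm : m + 3 = R + d + k)

lemma lA_le (R d k j : ℕ) : lA R d k j ≤ k := min_le_left _ _

include hk hR hd hRd hm in
lemma validA : ValidPlay (SimpleGraph.cycleGraph (m+3)) k (tA m R d k) := by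
  rw [validPlay_iff]
  refine ⟨?_, ?_, obligA hk hR hd hRd hm⟩
  · intro i s
    by_cases hi : i.val = 0
    · by_cases hs : s < k
      · right
        rw [tA_zero _ _ hi, tA_zero _ _ hi]
        have := adj_cast_pred (m := m) (a := m + 3 - min s k) (by omega)
        have he : m + 3 - min s k - 1 = m + 3 - min (s+1) k := by omega
        rwa [he] at this
      · left
        rw [tA_zero _ _ hi, tA_zero _ _ hi]
        congr 1
        omega
    · have hj2 : i.val ≤ d - 1 := by have := i.isLt; omega
      by_cases hs : bA R d k i.val ≤ s ∧ s < bA R d k i.val + lA R d k i.val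
      · right
        rw [tA_pos _ _ hi, tA_pos _ _ hi]
        have := adj_cast_succ (m := m)
          (i.val + bA R d k i.val + min (s - bA R d k i.val) (lA R d k i.val))
        have he : i.val + bA R d k i.val + min (s - bA R d k i.val) (lA R d k i.val) + 1 =
            i.val + bA R d k i.val + min (s + 1 - bA R d k i.val) (lA R d k i.val) := by
          omega
        rwa [he] at this
      · left
        rw [tA_pos _ _ hi, tA_pos _ _ hi]
        congr 1
        omega
  · intro i s
    by_cases hi : i.val = 0
    · rw [movesA_zero hk hR hd hm _ hi]
      omega
    · rw [movesA_pos hk hR hd hm _ hi]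
      have := lA_le R d k i.val
      omega

include hRd in
lemma coverA : ∀ j, 1 ≤ j → j ≤ d - 1 → ∀ w, 1 ≤ w → w ≤ j + bA R d k j + lA R d k j →
    ∃ i, 1 ≤ i ∧ i ≤ j ∧ i + bA R d k i ≤ w ∧ w ≤ i + bA R d k i + lA R d k i := by
  intro j
  induction j with
  | zero => omega
  | succ j ih =>
    intro h1 h2 w hw1 hw2
    by_cases hj0 : j = 0
    · subst hj0
      have hb1 := bA_one hRd
      simp only [Nat.zero_add] at hw2 ⊢
      exact ⟨1, le_refl _, le_refl _, by omega, by omega⟩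
    · by_cases hcase : (j + 1) + bA R d k (j + 1) ≤ w
      · exact ⟨j + 1, by omega, le_refl _, hcase, hw2⟩
      · have hstep : bA R d k j + lA R d k j = bA R d k (j + 1) :=
          bA_succ R d k (by omega) (by omega)
        obtain ⟨i, hi1, hi2, hi3, hi4⟩ := ih (by omega) (by omega) w hw1 (by omega)
        exact ⟨i, hi1, by omega, hi3, hi4⟩

include hk hR hd hRd hm in
lemma covA : ∀ v : Fin (m+3), ∃ i s, tA m R d k s i = v := by
  intro v
  have hv : ((v.val : ℕ) : Fin (m+3)) = v := Fin.cast_val_eq_self v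
  have hvlt := v.isLt
  have hmem : ((v.val : ℕ) : Fin (m+3)) ∈ protectedSet (tA m R d k) (R + k) := by
    rw [protA_mem hk hR hd hm _ (by omega)]
    rcases (by omega : v.val = 0 ∨ (m + 3 - k ≤ v.val ∧ v.val ≤ m + 2) ∨
        (1 ≤ v.val ∧ v.val ≤ m + 2 - k)) with h | h | h
    · exact Or.inl h
    · refine Or.inr (Or.inl ⟨?_, by omega⟩)
      omega
    · refine Or.inr (Or.inr ?_)
      have hbd1 := bA_d1 R d k (by omega)
      have hld1 := lA_last R d k hR (by omega)
      obtain ⟨i, hi1, hi2, hi3, hi4⟩ := coverA hRd (d - 1) (by omega) (le_refl _) v.val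
        (by omega) (by rw [hbd1, hld1]; omega)
      have hmono : bA R d k i ≤ bA R d k d := bA_mono R d k (by omega)
      have hbAd := bA_last R d k
      have hle := lA_le R d k i
      have hminle : min (R + k - bA R d k i) (lA R d k i) = lA R d k i := by omega
      exact ⟨i, hi1, hi2, by omega, by omega⟩
  obtain ⟨i, s', hs', he⟩ := hmem
  exact ⟨i, s', by rw [he, hv]⟩

end CaseA4

/-- The successful cascade play with `d` searchers when `n ≥ d + 2k`. -/
lemma successful_cascade {m d k : ℕ} (hk : 2 ≤ k) (hd : 2 ≤ d)
    (h1 : k ≤ m + 3 - d - k) (h2 : m + 3 - d - k ≤ (d - 1) * k) :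
    ∃ t : ℕ → Fin d → Fin (m+3), Successful (SimpleGraph.cycleGraph (m+3)) k t := by
  have hm : m + 3 = (m + 3 - d - k) + d + k := by
    by_contra h
    have : m + 3 - d - k = 0 := by omega
    omega
  exact ⟨tA m (m + 3 - d - k) d k, validA hk h1 hd h2 hm, covA hk h1 hd h2 hm⟩

/-- One single searcher can never move on the cycle. -/
lemma not_one {m k : ℕ} (t : ℕ → Fin 1 → Fin (m+3))
    (h : Successful (SimpleGraph.cycleGraph (m+3)) k t) : False := by
  obtain ⟨⟨hedge, hmv, hobl⟩, hcov⟩ := h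
  have hconst : ∀ s, t s 0 = t 0 0 := by
    intro s
    induction s using Nat.strong_induction_on with
    | _ s ih =>
      match s with
      | 0 => rfl
      | s + 1 =>
        have hprot : protectedSet t s = {t 0 0} := by
          ext u
          constructor
          · rintro ⟨i, s', hs', rfl⟩
            rw [Subsingleton.elim i 0, ih s' (by omega)]
            rfl
          · rintro rfl
            exact ⟨0, 0, Nat.zero_le s, rfl⟩
        have hsub : {t 0 0 - 1, t 0 0 + 1} ⊆
            unprotNbrs (SimpleGraph.cycleGraph (m+3)) t s (t 0 0) := by
          rintro u (rfl | rfl)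
          · refine ⟨adj_iff.mpr (Or.inl rfl), ?_⟩
            rw [hprot, Set.mem_singleton_iff, sub_eq_self]
            exact one_ne_zero
          · refine ⟨adj_iff.mpr (Or.inr rfl), ?_⟩
            rw [hprot, Set.mem_singleton_iff]
            intro hcontra
            exact one_ne_zero (left_eq_add.mp hcontra.symm)
        have hne2 : (t 0 0 - 1 : Fin (m+3)) ≠ t 0 0 + 1 := by
          intro hcontra
          have h3 : t 0 0 = t 0 0 + 2 := by linear_combination hcontra
          have h2 : (2 : Fin (m+3)) = 0 := left_eq_add.mp h3
          have hv2 : ((2 : ℕ) : Fin (m+3)) = ((0 : ℕ) : Fin (m+3)) := by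
            push_cast
            exact h2
          rw [cast_inj_of_lt (by omega) (by omega)] at hv2
          omega
        have hcard2 : 2 ≤ (unprotNbrs (SimpleGraph.cycleGraph (m+3)) t s (t 0 0)).ncard := by
          calc 2 = ({t 0 0 - 1, t 0 0 + 1} : Set (Fin (m+3))).ncard :=
              (Set.ncard_pair hne2).symm
            _ ≤ _ := Set.ncard_le_ncard hsub (Set.toFinite _)
        have hcard1 : (mobileOn k t s (t 0 0)).ncard ≤ 1 := by
          calc (mobileOn k t s (t 0 0)).ncard
              ≤ (Set.univ : Set (Fin 1)).ncard :=
                Set.ncard_le_ncard (Set.subset_univ _) (Set.toFinite _)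
            _ = 1 := by rw [Set.ncard_univ]; simp
        have hstay := (hobl s (t 0 0)).2 (by rintro ⟨-, hle⟩; omega) 0 (ih s (by omega))
        rw [hstay, ih s (by omega)]
  obtain ⟨i, s, hs⟩ := hcov (t 0 0 + 1)
  rw [Subsingleton.elim i 0, hconst s] at hs
  exact one_ne_zero (left_eq_add.mp hs)


end Deduction

/-- `d_k(C_n) = max {2, ⌈n / (k+1)⌉}` for `k ≥ 2`, `n ≥ 3`. -/
theorem stmt_11 (k n : ℕ) (hk : 2 ≤ k) (hn : 3 ≤ n) :
    Deduction.deductionNumber (SimpleGraph.cycleGraph n) k =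
      max 2 ⌈(n : ℚ) / (k + 1)⌉₊ := by
  classical
  obtain ⟨m, rfl⟩ : ∃ m, n = m + 3 := ⟨n - 3, by omega⟩
  have hkpos : (0 : ℚ) < (k : ℚ) + 1 := by positivity
  have hceil_le : ∀ x : ℕ, (⌈((m + 3 : ℕ) : ℚ) / ((k : ℚ) + 1)⌉₊ ≤ x ↔ m + 3 ≤ x * (k + 1)) := by
    intro x
    rw [Nat.ceil_le, div_le_iff₀ hkpos]
    constructor
    · intro h
      have : ((m + 3 : ℕ) : ℚ) ≤ ((x * (k + 1) : ℕ) : ℚ) := by push_cast; push_cast at h; linarith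
      exact_mod_cast this
    · intro h
      have : ((m + 3 : ℕ) : ℚ) ≤ ((x * (k + 1) : ℕ) : ℚ) := by exact_mod_cast h
      push_cast at this ⊢
      linarith
  set D := max 2 ⌈((m + 3 : ℕ) : ℚ) / ((k : ℚ) + 1)⌉₊ with hD
  have hmem : D ∈ {d | ∃ t : ℕ → Fin d → Fin (m + 3),
      Deduction.Successful (SimpleGraph.cycleGraph (m + 3)) k t} := by
    by_cases hsmall : m + 3 ≤ 2 * k + 2
    · have hD2 : D = 2 := by
        rw [hD, max_eq_left ((hceil_le 2).mpr (by omega))]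
      rw [hD2]
      exact Deduction.successful_two hk hsmall
    · have h3 : 3 ≤ ⌈((m + 3 : ℕ) : ℚ) / ((k : ℚ) + 1)⌉₊ := by
        by_contra h
        have := (hceil_le 2).mp (by omega)
        omega
      have hDceil : D = ⌈((m + 3 : ℕ) : ℚ) / ((k : ℚ) + 1)⌉₊ := max_eq_right (by omega)
      obtain ⟨e, he⟩ : ∃ e, ⌈((m + 3 : ℕ) : ℚ) / ((k : ℚ) + 1)⌉₊ = e + 3 :=
        ⟨⌈((m + 3 : ℕ) : ℚ) / ((k : ℚ) + 1)⌉₊ - 3, by omega⟩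
      have hub : m + 3 ≤ (e + 3) * (k + 1) := (hceil_le (e + 3)).mp (by omega)
      have hlb : (e + 2) * (k + 1) < m + 3 := by
        have h4 : (e + 2) < ⌈((m + 3 : ℕ) : ℚ) / ((k : ℚ) + 1)⌉₊ := by omega
        have h5 := Nat.lt_ceil.mp h4
        rw [lt_div_iff₀ hkpos] at h5
        have h6 : (((e + 2) * (k + 1) : ℕ) : ℚ) < ((m + 3 : ℕ) : ℚ) := by push_cast; push_cast at h5; linarith
        exact_mod_cast h6
      rw [hDceil, he]
      have e1 : (e + 3) * (k + 1) = (e + 2) * (k + 1) + (k + 1) := by ring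
      have e2 : (e + 2) * (k + 1) = (e + 2) * k + (e + 2) := by ring
      have e3 : (e + 2) * k = (e + 1) * k + k := by ring
      have e4 : k ≤ (e + 1) * k := Nat.le_mul_of_pos_left k (by omega)
      have e5 : (e + 3 - 1) * k = (e + 2) * k := by norm_num
      refine Deduction.successful_cascade hk (by omega) (by omega) ?_
      rw [e5]
      omega
  refine le_antisymm (Nat.sInf_le hmem) (le_csInf ⟨D, hmem⟩ ?_)
  rintro x ⟨t, ht⟩
  have hx2 : 2 ≤ x := by
    rcases Nat.lt_or_ge x 2 with hlt | hge
    · exfalso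
      interval_cases x
      · obtain ⟨i, -, -⟩ := ht.2 0
        exact i.elim0
      · exact Deduction.not_one t ht
    · exact hge
  have hxc : ⌈((m + 3 : ℕ) : ℚ) / ((k : ℚ) + 1)⌉₊ ≤ x := by
    refine (hceil_le x).mpr ?_
    have := Deduction.card_le_of_successful ht
    simpa using this
  rw [hD]
  exact max_le hx2 hxc
end

section
/- Let k ≥ 1 and let G and H be finite connected graphs of orders m and n respectively. Then d_k(G □ H) ≤ min{m·d_k(H), n·d_k(G)}, where G □ H is the Cartesian product. -/
namespace DeductionAux
open Deduction SimpleGraph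

/-- The trivial layout: one searcher per vertex. -/
lemma exists_layout {γ : Type*} [Fintype γ] (G : SimpleGraph γ) (k : ℕ) :
    ∃ t : ℕ → Fin (Fintype.card γ) → γ, Successful G k t := by
  refine ⟨fun _ i => (Fintype.equivFin γ).symm i, ⟨?_, ?_, ?_⟩, ?_⟩
  · intro i s; left; rfl
  · intro i s
    have h : movesBefore (fun (_ : ℕ) i => (Fintype.equivFin γ).symm i) i s = 0 := by
      unfold movesBefore
      convert Set.ncard_empty ℕ using 2
      ext s'; simp
    simp [h]
  · intro s v
    have hemp : unprotNbrs G (fun (_ : ℕ) i => (Fintype.equivFin γ).symm i) s v = ∅ := by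
      ext u
      simp only [unprotNbrs, Set.mem_setOf_eq, Set.mem_empty_iff_false, iff_false, not_and]
      intro _ hu
      exact hu ⟨Fintype.equivFin γ u, 0, Nat.zero_le s, by simp⟩
    constructor
    · rintro ⟨hne, -⟩
      rw [hemp] at hne
      exact absurd hne (by simp)
    · intro _ i _; rfl
  · intro v; exact ⟨Fintype.equivFin γ v, 0, by simp⟩

/-- From a successful play on `G`, a successful play on `G □ H` using one copy
of the layout in each fibre `α × {b}`. -/
lemma key_left {α β : Type*} [Fintype α] [Fintype β] (G : SimpleGraph α) (H : SimpleGraph β)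
    (k d : ℕ) (t : ℕ → Fin d → α) (ht : Successful G k t) :
    ∃ T : ℕ → Fin (Fintype.card β * d) → α × β, Successful (G □ H) k T := by
  classical
  obtain ⟨⟨h1, h2, h3⟩, h4⟩ := ht
  let e : Fin (Fintype.card β * d) ≃ β × Fin d := Fintype.equivOfCardEq (by simp)
  let T : ℕ → Fin (Fintype.card β * d) → α × β := fun s j => (t s (e j).2, (e j).1)
  have hmov : ∀ j s, movesBefore T j s = movesBefore t (e j).2 s := by
    intro j s
    unfold movesBefore
    congr 1
    ext s'
    simp only [Set.mem_setOf_eq, T, ne_eq, Prod.mk.injEq, and_true]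
  have hprot : ∀ s (x : α × β), x ∈ protectedSet T s ↔ x.1 ∈ protectedSet t s := by
    intro s x
    constructor
    · rintro ⟨j, s', hs', hj⟩
      exact ⟨(e j).2, s', hs', congrArg Prod.fst hj⟩
    · rintro ⟨i, s', hs', hi⟩
      refine ⟨e.symm (x.2, i), s', hs', ?_⟩
      simp [T, hi]
  have hnos : ∀ s v b, v ∉ protectedSet t s → ∀ j, T s j ≠ (v, b) := by
    intro s v b hv j hj
    exact hv ⟨(e j).2, s, le_refl s, congrArg Prod.fst hj⟩
  have hunprot : ∀ s v b, v ∈ protectedSet t s →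
      unprotNbrs (G □ H) T s (v, b) = (fun u => (u, b)) '' unprotNbrs G t s v := by
    intro s v b hv
    ext x
    simp only [unprotNbrs, Set.mem_setOf_eq, Set.mem_image, boxProd_adj, hprot]
    constructor
    · rintro ⟨hadj, hx⟩
      rcases hadj with ⟨hG', hb⟩ | ⟨hH', ha⟩
      · exact ⟨x.1, ⟨hG', hx⟩, by rw [hb]⟩
      · exact absurd (ha ▸ hv) hx
    · rintro ⟨u, ⟨hadj, hu⟩, rfl⟩
      exact ⟨Or.inl ⟨hadj, rfl⟩, hu⟩
  have hmob : ∀ s v b, mobileOn k T s (v, b) = (fun i => e.symm (b, i)) '' mobileOn k t s v := by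
    intro s v b
    ext j
    simp only [mobileOn, Set.mem_setOf_eq, Set.mem_image, hmov]
    constructor
    · rintro ⟨hj, hk'⟩
      refine ⟨(e j).2, ⟨congrArg Prod.fst hj, hk'⟩, ?_⟩
      have hb' : (e j).1 = b := congrArg Prod.snd hj
      have heta : ((e j).1, (e j).2) = e j := rfl
      rw [← hb', heta, Equiv.symm_apply_apply]
    · rintro ⟨i, ⟨hi, hk'⟩, rfl⟩
      refine ⟨?_, by simpa using hk'⟩
      simp [T, hi]
  have hinj1 : ∀ b : β, Function.Injective (fun u : α => (u, b)) := by
    intro b a a' h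
    exact (Prod.ext_iff.mp h).1
  have hinj2 : ∀ b : β, Function.Injective (fun i : Fin d => e.symm (b, i)) := by
    intro b i i' h
    exact (Prod.ext_iff.mp (e.symm.injective h)).2
  refine ⟨T, ⟨?_, ?_, ?_⟩, ?_⟩
  · intro j s
    rcases h1 (e j).2 s with h | h
    · left; simp [T, h]
    · right
      show (G □ H).Adj (t s (e j).2, (e j).1) (t (s + 1) (e j).2, (e j).1)
      rw [boxProd_adj]
      exact Or.inl ⟨h, rfl⟩
  · intro j s
    rw [hmov]
    exact h2 _ _
  · rintro s ⟨v, b⟩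
    by_cases hv : v ∈ protectedSet t s
    · have hu := hunprot s v b hv
      have hm := hmob s v b
      have hcard_u : (unprotNbrs (G □ H) T s (v, b)).ncard = (unprotNbrs G t s v).ncard := by
        rw [hu, Set.ncard_image_of_injective _ (hinj1 b)]
      have hcard_m : (mobileOn k T s (v, b)).ncard = (mobileOn k t s v).ncard := by
        rw [hm, Set.ncard_image_of_injective _ (hinj2 b)]
      have hne : (unprotNbrs (G □ H) T s (v, b)).Nonempty ↔ (unprotNbrs G t s v).Nonempty := by
        rw [hu]; exact Set.image_nonempty
      constructor
      · rintro ⟨hne', hle⟩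
        have hcond : (unprotNbrs G t s v).Nonempty ∧
            (unprotNbrs G t s v).ncard ≤ (mobileOn k t s v).ncard :=
          ⟨hne.mp hne', by rwa [hcard_u, hcard_m] at hle⟩
        obtain ⟨c1, c2⟩ := (h3 s v).1 hcond
        constructor
        · intro j hj
          rw [hm] at hj
          obtain ⟨i, hi, rfl⟩ := hj
          rw [hu]
          refine ⟨t (s + 1) i, c1 i hi, ?_⟩
          simp [T]
        · intro u hu'
          rw [hu] at hu'
          obtain ⟨w, hw, rfl⟩ := hu'
          obtain ⟨i, hi, hti⟩ := c2 w hw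
          refine ⟨e.symm (b, i), ?_, ?_⟩
          · rw [hm]; exact ⟨i, hi, rfl⟩
          · simp [T, hti]
      · intro hncond j hj
        have hnG : ¬ ((unprotNbrs G t s v).Nonempty ∧
            (unprotNbrs G t s v).ncard ≤ (mobileOn k t s v).ncard) := by
          intro hcond
          exact hncond ⟨hne.mpr hcond.1, by rw [hcard_u, hcard_m]; exact hcond.2⟩
        have hstay := (h3 s v).2 hnG (e j).2 (congrArg Prod.fst hj)
        show (t (s + 1) (e j).2, (e j).1) = (t s (e j).2, (e j).1)
        rw [hstay]
    · constructor
      · rintro ⟨hne', hle⟩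
        exfalso
        have hm0 : mobileOn k T s (v, b) = ∅ := by
          ext j
          simp only [mobileOn, Set.mem_setOf_eq, Set.mem_empty_iff_false, iff_false, not_and]
          intro hj _
          exact hnos s v b hv j hj
        rw [hm0, Set.ncard_empty] at hle
        have hp : 0 < (unprotNbrs (G □ H) T s (v, b)).ncard := (Set.ncard_pos (Set.toFinite _)).mpr hne'
        omega
      · intro _ j hj
        exact absurd hj (hnos s v b hv j)
  · intro x
    obtain ⟨i, s, hi⟩ := h4 x.1
    exact ⟨e.symm (x.2, i), s, by simp [T, hi]⟩

/-- From a successful play on `H`, a successful play on `G □ H` using one copy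
of the layout in each fibre `{a} × β`. -/
lemma key_right {α β : Type*} [Fintype α] [Fintype β] (G : SimpleGraph α) (H : SimpleGraph β)
    (k d : ℕ) (t : ℕ → Fin d → β) (ht : Successful H k t) :
    ∃ T : ℕ → Fin (Fintype.card α * d) → α × β, Successful (G □ H) k T := by
  classical
  obtain ⟨⟨h1, h2, h3⟩, h4⟩ := ht
  let e : Fin (Fintype.card α * d) ≃ α × Fin d := Fintype.equivOfCardEq (by simp)
  let T : ℕ → Fin (Fintype.card α * d) → α × β := fun s j => ((e j).1, t s (e j).2)
  have hmov : ∀ j s, movesBefore T j s = movesBefore t (e j).2 s := by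
    intro j s
    unfold movesBefore
    congr 1
    ext s'
    simp only [Set.mem_setOf_eq, T, ne_eq, Prod.mk.injEq, true_and]
  have hprot : ∀ s (x : α × β), x ∈ protectedSet T s ↔ x.2 ∈ protectedSet t s := by
    intro s x
    constructor
    · rintro ⟨j, s', hs', hj⟩
      exact ⟨(e j).2, s', hs', congrArg Prod.snd hj⟩
    · rintro ⟨i, s', hs', hi⟩
      refine ⟨e.symm (x.1, i), s', hs', ?_⟩
      simp [T, hi]
  have hnos : ∀ s (b : α) (v : β), v ∉ protectedSet t s → ∀ j, T s j ≠ (b, v) := by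
    intro s b v hv j hj
    exact hv ⟨(e j).2, s, le_refl s, congrArg Prod.snd hj⟩
  have hunprot : ∀ s (b : α) (v : β), v ∈ protectedSet t s →
      unprotNbrs (G □ H) T s (b, v) = (fun u => (b, u)) '' unprotNbrs H t s v := by
    intro s b v hv
    ext x
    simp only [unprotNbrs, Set.mem_setOf_eq, Set.mem_image, boxProd_adj, hprot]
    constructor
    · rintro ⟨hadj, hx⟩
      rcases hadj with ⟨hG', hb⟩ | ⟨hH', ha⟩
      · exact absurd (hb ▸ hv) hx
      · exact ⟨x.2, ⟨hH', hx⟩, by rw [ha]⟩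
    · rintro ⟨u, ⟨hadj, hu⟩, rfl⟩
      exact ⟨Or.inr ⟨hadj, rfl⟩, hu⟩
  have hmob : ∀ s (b : α) (v : β),
      mobileOn k T s (b, v) = (fun i => e.symm (b, i)) '' mobileOn k t s v := by
    intro s b v
    ext j
    simp only [mobileOn, Set.mem_setOf_eq, Set.mem_image, hmov]
    constructor
    · rintro ⟨hj, hk'⟩
      refine ⟨(e j).2, ⟨congrArg Prod.snd hj, hk'⟩, ?_⟩
      have hb' : (e j).1 = b := congrArg Prod.fst hj
      have heta : ((e j).1, (e j).2) = e j := rfl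
      rw [← hb', heta, Equiv.symm_apply_apply]
    · rintro ⟨i, ⟨hi, hk'⟩, rfl⟩
      refine ⟨?_, by simpa using hk'⟩
      simp [T, hi]
  have hinj1 : ∀ b : α, Function.Injective (fun u : β => (b, u)) := by
    intro b a a' h
    exact (Prod.ext_iff.mp h).2
  have hinj2 : ∀ b : α, Function.Injective (fun i : Fin d => e.symm (b, i)) := by
    intro b i i' h
    exact (Prod.ext_iff.mp (e.symm.injective h)).2
  refine ⟨T, ⟨?_, ?_, ?_⟩, ?_⟩
  · intro j s
    rcases h1 (e j).2 s with h | h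
    · left; simp [T, h]
    · right
      show (G □ H).Adj ((e j).1, t s (e j).2) ((e j).1, t (s + 1) (e j).2)
      rw [boxProd_adj]
      exact Or.inr ⟨h, rfl⟩
  · intro j s
    rw [hmov]
    exact h2 _ _
  · rintro s ⟨b, v⟩
    by_cases hv : v ∈ protectedSet t s
    · have hu := hunprot s b v hv
      have hm := hmob s b v
      have hcard_u : (unprotNbrs (G □ H) T s (b, v)).ncard = (unprotNbrs H t s v).ncard := by
        rw [hu, Set.ncard_image_of_injective _ (hinj1 b)]
      have hcard_m : (mobileOn k T s (b, v)).ncard = (mobileOn k t s v).ncard := by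
        rw [hm, Set.ncard_image_of_injective _ (hinj2 b)]
      have hne : (unprotNbrs (G □ H) T s (b, v)).Nonempty ↔ (unprotNbrs H t s v).Nonempty := by
        rw [hu]; exact Set.image_nonempty
      constructor
      · rintro ⟨hne', hle⟩
        have hcond : (unprotNbrs H t s v).Nonempty ∧
            (unprotNbrs H t s v).ncard ≤ (mobileOn k t s v).ncard :=
          ⟨hne.mp hne', by rwa [hcard_u, hcard_m] at hle⟩
        obtain ⟨c1, c2⟩ := (h3 s v).1 hcond
        constructor
        · intro j hj
          rw [hm] at hj
          obtain ⟨i, hi, rfl⟩ := hj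
          rw [hu]
          refine ⟨t (s + 1) i, c1 i hi, ?_⟩
          simp [T]
        · intro u hu'
          rw [hu] at hu'
          obtain ⟨w, hw, rfl⟩ := hu'
          obtain ⟨i, hi, hti⟩ := c2 w hw
          refine ⟨e.symm (b, i), ?_, ?_⟩
          · rw [hm]; exact ⟨i, hi, rfl⟩
          · simp [T, hti]
      · intro hncond j hj
        have hnG : ¬ ((unprotNbrs H t s v).Nonempty ∧
            (unprotNbrs H t s v).ncard ≤ (mobileOn k t s v).ncard) := by
          intro hcond
          exact hncond ⟨hne.mpr hcond.1, by rw [hcard_u, hcard_m]; exact hcond.2⟩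
        have hstay := (h3 s v).2 hnG (e j).2 (congrArg Prod.snd hj)
        show ((e j).1, t (s + 1) (e j).2) = ((e j).1, t s (e j).2)
        rw [hstay]
    · constructor
      · rintro ⟨hne', hle⟩
        exfalso
        have hm0 : mobileOn k T s (b, v) = ∅ := by
          ext j
          simp only [mobileOn, Set.mem_setOf_eq, Set.mem_empty_iff_false, iff_false, not_and]
          intro hj _
          exact hnos s b v hv j hj
        rw [hm0, Set.ncard_empty] at hle
        have hp : 0 < (unprotNbrs (G □ H) T s (b, v)).ncard :=
          (Set.ncard_pos (Set.toFinite _)).mpr hne'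
        omega
      · intro _ j hj
        exact absurd hj (hnos s b v hv j)
  · intro x
    obtain ⟨i, s, hi⟩ := h4 x.2
    exact ⟨e.symm (x.1, i), s, by simp [T, hi]⟩

end DeductionAux


open SimpleGraph in
/-- Product upper bound: `d_k(G □ H) ≤ min {m·d_k(H), n·d_k(G)}`. -/
theorem stmt_14 {α β : Type*} [Fintype α] [Fintype β]
    (G : SimpleGraph α) (H : SimpleGraph β) (k : ℕ) (hk : 1 ≤ k)
    (hG : G.Connected) (hH : H.Connected) :
    Deduction.deductionNumber (G □ H) k ≤
      min (Fintype.card α * Deduction.deductionNumber H k)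
        (Fintype.card β * Deduction.deductionNumber G k) := by
  refine le_min ?_ ?_
  · have hne : {d : ℕ | ∃ t : ℕ → Fin d → β, Deduction.Successful H k t}.Nonempty :=
      ⟨Fintype.card β, DeductionAux.exists_layout H k⟩
    have hmem : Deduction.deductionNumber H k ∈
        {d : ℕ | ∃ t : ℕ → Fin d → β, Deduction.Successful H k t} := Nat.sInf_mem hne
    obtain ⟨t, htt⟩ := hmem
    obtain ⟨T, hT⟩ := DeductionAux.key_right G H k _ t htt
    exact Nat.sInf_le ⟨T, hT⟩
  · have hne : {d : ℕ | ∃ t : ℕ → Fin d → α, Deduction.Successful G k t}.Nonempty :=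
      ⟨Fintype.card α, DeductionAux.exists_layout G k⟩
    have hmem : Deduction.deductionNumber G k ∈
        {d : ℕ | ∃ t : ℕ → Fin d → α, Deduction.Successful G k t} := Nat.sInf_mem hne
    obtain ⟨t, htt⟩ := hmem
    obtain ⟨T, hT⟩ := DeductionAux.key_left G H k _ t htt
    exact Nat.sInf_le ⟨T, hT⟩
end

section
/- Let k ≥ 1 and let m, n be integers with 2 ≤ m ≤ n ≤ k+1. Then d_k(P_m □ P_n) = m, where P_m □ P_n is the m×n grid graph. -/
section Plays

open Deduction

variable {V : Type*} {G : SimpleGraph V} {k d : ℕ} {t : ℕ → Fin d → V}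

lemma protected_mono {s s' : ℕ} (h : s ≤ s') :
    protectedSet t s ⊆ protectedSet t s' := by
  rintro v ⟨i, r, hr, he⟩
  exact ⟨i, r, hr.trans h, he⟩

lemma pos_mem_protected (t : ℕ → Fin d → V) (s : ℕ) (i : Fin d) :
    t s i ∈ protectedSet t s := ⟨i, s, le_rfl, rfl⟩

lemma movesBefore_succ_of_move {s : ℕ} {i : Fin d} (hmv : t (s + 1) i ≠ t s i) :
    movesBefore t i (s + 1) = movesBefore t i s + 1 := by
  unfold movesBefore
  have hset : {s' : ℕ | s' < s + 1 ∧ t (s' + 1) i ≠ t s' i}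
      = insert s {s' : ℕ | s' < s ∧ t (s' + 1) i ≠ t s' i} := by
    ext x
    simp only [Set.mem_setOf_eq, Set.mem_insert_iff]
    constructor
    · rintro ⟨h1, h2⟩
      rcases Nat.lt_succ_iff_lt_or_eq.mp h1 with h | h
      · exact Or.inr ⟨h, h2⟩
      · exact Or.inl h
    · rintro (rfl | ⟨h1, h2⟩)
      · exact ⟨Nat.lt_succ_self _, hmv⟩
      · exact ⟨Nat.lt_succ_of_lt h1, h2⟩
  rw [hset, Set.ncard_insert_of_notMem (by simp) ((Set.finite_Iio s).subset (fun x hx => hx.1))]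

/-- If a searcher moves at stage `s`, then the firing condition held at its
old position and it moved to an unprotected neighbour. -/
lemma fire_of_move (hv : ValidPlay G k t) {s : ℕ} {i : Fin d}
    (hmv : t (s + 1) i ≠ t s i) :
    ((unprotNbrs G t s (t s i)).Nonempty ∧
      (unprotNbrs G t s (t s i)).ncard ≤ (mobileOn k t s (t s i)).ncard) ∧
    t (s + 1) i ∈ unprotNbrs G t s (t s i) := by
  obtain ⟨h1, h2, h3⟩ := hv
  by_cases hc : (unprotNbrs G t s (t s i)).Nonempty ∧
      (unprotNbrs G t s (t s i)).ncard ≤ (mobileOn k t s (t s i)).ncard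
  · refine ⟨hc, ?_⟩
    have hmob : i ∈ mobileOn k t s (t s i) := by
      refine ⟨rfl, ?_⟩
      rcases lt_or_eq_of_le (h2 i s) with h | h
      · exact h
      · exfalso
        have hb := h2 i (s + 1)
        rw [movesBefore_succ_of_move hmv, h] at hb
        omega
    exact ((h3 s (t s i)).1 hc).1 i hmob
  · exact absurd ((h3 s (t s i)).2 hc i rfl) hmv

/-- When a searcher leaves `v`, every neighbour of `v` is protected at the next
stage. -/
lemma nbrs_protected_of_move (hv : ValidPlay G k t) {s : ℕ} {i : Fin d}
    (hmv : t (s + 1) i ≠ t s i) {u : V} (hadj : G.Adj (t s i) u) :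
    u ∈ protectedSet t (s + 1) := by
  by_cases hu : u ∈ protectedSet t s
  · exact protected_mono (Nat.le_succ s) hu
  · have hc := (fire_of_move hv hmv).1
    obtain ⟨j, _, hj2⟩ := ((hv.2.2 s (t s i)).1 hc).2 u ⟨hadj, hu⟩
    exact hj2 ▸ pos_mem_protected t (s + 1) j

/-- Lemma A : a protected vertex with an unprotected neighbour is occupied. -/
lemma boundary_occupied (hv : ValidPlay G k t) {s : ℕ} {v u : V}
    (hvS : v ∈ protectedSet t s) (hadj : G.Adj v u)
    (huS : u ∉ protectedSet t s) : ∃ i, t s i = v := by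
  obtain ⟨i, s', hs', he⟩ := hvS
  refine ⟨i, ?_⟩
  have key : ∀ r, s' ≤ r → r ≤ s → t r i = v := by
    intro r hr1
    induction r, hr1 using Nat.le_induction with
    | base => exact fun _ => he
    | succ r hr ih =>
      intro hrs
      have hriv : t r i = v := ih (by omega)
      by_cases hmv : t (r + 1) i = t r i
      · rw [hmv, hriv]
      · exfalso
        exact huS (protected_mono (by omega)
          (nbrs_protected_of_move hv hmv (by rwa [hriv])))
  exact key s hs' le_rfl

/-- A newly protected vertex was reached by a mover coming from a protected
neighbour at which the firing condition held. -/
lemma new_cell (hv : ValidPlay G k t) {s : ℕ} {v : V}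
    (h1 : v ∈ protectedSet t (s + 1)) (h2 : v ∉ protectedSet t s) :
    ∃ i, t (s + 1) i = v ∧ t s i ∈ protectedSet t s ∧ G.Adj (t s i) v ∧
      ((unprotNbrs G t s (t s i)).Nonempty ∧
        (unprotNbrs G t s (t s i)).ncard ≤ (mobileOn k t s (t s i)).ncard) := by
  obtain ⟨i, s', hs', he⟩ := h1
  have hs'' : s' = s + 1 := by
    rcases Nat.lt_succ_iff_lt_or_eq.mp (Nat.lt_succ_of_le hs') with h | h
    · exact absurd ⟨i, s', by omega, he⟩ h2
    · omega
  subst hs''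
  have hmv : t (s + 1) i ≠ t s i := fun h => h2 (by rw [← he, h]; exact pos_mem_protected t s i)
  obtain ⟨hc, hmem⟩ := fire_of_move hv hmv
  exact ⟨i, he, pos_mem_protected t s i, he ▸ hmem.1, hc⟩

lemma exists_full_stage [Fintype V] (hs : Successful G k t) :
    ∃ s, ∀ v : V, v ∈ protectedSet t s := by
  classical
  choose f g hfg using hs.2
  exact ⟨Finset.univ.sup g, fun v =>
    ⟨f v, g v, Finset.le_sup (Finset.mem_univ v), hfg v⟩⟩

end Plays

namespace GridLB

open Deduction SimpleGraph

lemma nat_walk {P : ℕ → Prop} {a b : ℕ} (ha : P a) (hb : ¬ P b) (hab : a < b) :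
    ∃ c, a ≤ c ∧ c < b ∧ P c ∧ ¬ P (c + 1) := by
  classical
  have hex : ∃ j, ¬ P (a + j) := ⟨b - a, by rwa [Nat.add_sub_cancel' hab.le]⟩
  have hj0 : ¬ P (a + Nat.find hex) := Nat.find_spec hex
  have hpos : 0 < Nat.find hex := by
    rcases Nat.eq_zero_or_pos (Nat.find hex) with h | h
    · exfalso; apply hj0; rw [h]; simpa using ha
    · exact h
  have hle : Nat.find hex ≤ b - a := Nat.find_min' hex (by rwa [Nat.add_sub_cancel' hab.le])
  have hmin : P (a + (Nat.find hex - 1)) := by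
    by_contra h
    exact Nat.find_min hex (by omega) h
  exact ⟨a + (Nat.find hex - 1), by omega, by omega, hmin,
    by rwa [show a + (Nat.find hex - 1) + 1 = a + Nat.find hex by omega]⟩

variable {m n k d : ℕ} {t : ℕ → Fin d → Fin m × Fin n}

/-- Row `a` is fully protected at stage `s`. -/
def RowFull (t : ℕ → Fin d → Fin m × Fin n) (s : ℕ) (a : Fin m) : Prop :=
  ∀ b, (a, b) ∈ protectedSet t s

/-- Row `a` contains a protected vertex at stage `s`. -/
def RowNE (t : ℕ → Fin d → Fin m × Fin n) (s : ℕ) (a : Fin m) : Prop :=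
  ∃ b, (a, b) ∈ protectedSet t s

def ColFull (t : ℕ → Fin d → Fin m × Fin n) (s : ℕ) (b : Fin n) : Prop :=
  ∀ a, (a, b) ∈ protectedSet t s

def ColNE (t : ℕ → Fin d → Fin m × Fin n) (s : ℕ) (b : Fin n) : Prop :=
  ∃ a, (a, b) ∈ protectedSet t s

/-- A mixed row contains an occupied vertex. -/
lemma row_witness (hv : ValidPlay (pathGraph m □ pathGraph n) k t) {s : ℕ} {a : Fin m}
    (hne : RowNE t s a) (hnf : ¬ RowFull t s a) : ∃ i, (t s i).1 = a := by
  obtain ⟨b1, hb1⟩ := hne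
  have hb2 : ∃ b, (a, b) ∉ protectedSet t s := by
    by_contra h
    push_neg at h
    exact hnf h
  obtain ⟨b2, hb2⟩ := hb2
  set P : ℕ → Prop := fun c => ∃ h : c < n, (a, (⟨c, h⟩ : Fin n)) ∈ protectedSet t s with hP
  have hPb1 : P b1.val := ⟨b1.isLt, by simpa using hb1⟩
  have hPb2 : ¬ P b2.val := by
    rintro ⟨h, hmem⟩
    exact hb2 (by simpa using hmem)
  have hne12 : b1.val ≠ b2.val := by
    intro h
    exact hPb2 (h ▸ hPb1)
  have key : ∀ c : ℕ, ∀ hc1 : c < n, ∀ hc2 : c + 1 < n,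
      (a, (⟨c, hc1⟩ : Fin n)) ∈ protectedSet t s →
      (a, (⟨c + 1, hc2⟩ : Fin n)) ∉ protectedSet t s → ∃ i, (t s i).1 = a := by
    intro c hc1 hc2 hmem hnmem
    have hadj : (pathGraph m □ pathGraph n).Adj (a, (⟨c, hc1⟩ : Fin n))
        (a, (⟨c + 1, hc2⟩ : Fin n)) := by
      rw [boxProd_adj]
      exact Or.inr ⟨pathGraph_adj.mpr (Or.inl rfl), rfl⟩
    obtain ⟨i, hi⟩ := boundary_occupied hv hmem hadj hnmem
    exact ⟨i, by rw [hi]⟩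
  rcases Nat.lt_or_ge b1.val b2.val with h | h
  · obtain ⟨c, _, hcb, hc1, hc2⟩ := nat_walk hPb1 hPb2 h
    have hcn : c < n := by omega
    have hcn1 : c + 1 < n := by have := b2.isLt; omega
    refine key c hcn hcn1 ?_ ?_
    · obtain ⟨h', hm'⟩ := hc1; exact hm'
    · intro hmem; exact hc2 ⟨hcn1, hmem⟩
  · have h' : b2.val < b1.val := by omega
    obtain ⟨c, _, hcb, hc1, hc2⟩ := nat_walk (P := fun c => ¬ P c) hPb2 (not_not.mpr hPb1) h'
    have hcn1 : c + 1 < n := by have := b1.isLt; omega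
    have hcn : c < n := by omega
    have hPc1 : P (c + 1) := not_not.mp hc2
    have hadj : (pathGraph m □ pathGraph n).Adj (a, (⟨c + 1, hcn1⟩ : Fin n))
        (a, (⟨c, hcn⟩ : Fin n)) := by
      rw [boxProd_adj]
      exact Or.inr ⟨pathGraph_adj.mpr (Or.inr rfl), rfl⟩
    have hmem : (a, (⟨c + 1, hcn1⟩ : Fin n)) ∈ protectedSet t s := hPc1.2
    have hnmem : (a, (⟨c, hcn⟩ : Fin n)) ∉ protectedSet t s := fun hmem' => hc1 ⟨hcn, hmem'⟩
    obtain ⟨i, hi⟩ := boundary_occupied hv hmem hadj hnmem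
    exact ⟨i, by rw [hi]⟩

/-- A mixed column contains an occupied vertex. -/
lemma col_witness (hv : ValidPlay (pathGraph m □ pathGraph n) k t) {s : ℕ} {b : Fin n}
    (hne : ColNE t s b) (hnf : ¬ ColFull t s b) : ∃ i, (t s i).2 = b := by
  obtain ⟨a1, ha1⟩ := hne
  have ha2 : ∃ a, (a, b) ∉ protectedSet t s := by
    by_contra h
    push_neg at h
    exact hnf h
  obtain ⟨a2, ha2⟩ := ha2
  set P : ℕ → Prop := fun c => ∃ h : c < m, ((⟨c, h⟩ : Fin m), b) ∈ protectedSet t s with hP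
  have hPa1 : P a1.val := ⟨a1.isLt, by simpa using ha1⟩
  have hPa2 : ¬ P a2.val := by
    rintro ⟨h, hmem⟩
    exact ha2 (by simpa using hmem)
  have key : ∀ c c' : ℕ, ∀ hc1 : c < m, ∀ hc2 : c' < m, (c + 1 = c' ∨ c' + 1 = c) →
      ((⟨c, hc1⟩ : Fin m), b) ∈ protectedSet t s →
      ((⟨c', hc2⟩ : Fin m), b) ∉ protectedSet t s → ∃ i, (t s i).2 = b := by
    intro c c' hc1 hc2 hcc hmem hnmem
    have hadj : (pathGraph m □ pathGraph n).Adj ((⟨c, hc1⟩ : Fin m), b)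
        ((⟨c', hc2⟩ : Fin m), b) := by
      rw [boxProd_adj]
      exact Or.inl ⟨pathGraph_adj.mpr hcc, rfl⟩
    obtain ⟨i, hi⟩ := boundary_occupied hv hmem hadj hnmem
    exact ⟨i, by rw [hi]⟩
  have hne12 : a1.val ≠ a2.val := fun h => hPa2 (h ▸ hPa1)
  rcases Nat.lt_or_ge a1.val a2.val with h | h
  · obtain ⟨c, _, hcb, hc1, hc2⟩ := nat_walk hPa1 hPa2 h
    have haux := a2.isLt
    have hcm : c < m := by omega
    have hcm1 : c + 1 < m := by have := a2.isLt; omega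
    exact key c (c + 1) hcm hcm1 (Or.inl rfl) hc1.2 (fun hmem' => hc2 ⟨hcm1, hmem'⟩)
  · have h' : a2.val < a1.val := by omega
    obtain ⟨c, _, hcb, hc1, hc2⟩ := nat_walk (P := fun c => ¬ P c) hPa2 (not_not.mpr hPa1) h'
    have haux := a1.isLt
    have hcm1 : c + 1 < m := by omega
    have hcm : c < m := by omega
    exact key (c + 1) c hcm1 hcm (Or.inr rfl) (not_not.mp hc2).2
      (fun hmem' => hc1 ⟨hcm, hmem'⟩)

/-- If every element of `A` is hit by `f : Fin d → α`, then `A.card ≤ d`. -/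
lemma card_le_d {α : Type*} [DecidableEq α] (f : Fin d → α) (A : Finset α)
    (h : ∀ a ∈ A, ∃ i, f i = a) : A.card ≤ d := by
  classical
  calc A.card ≤ (Finset.univ.image f).card := by
        refine Finset.card_le_card (fun a ha => Finset.mem_image.mpr ?_)
        obtain ⟨i, hi⟩ := h a ha
        exact ⟨i, Finset.mem_univ _, hi⟩
    _ ≤ (Finset.univ : Finset (Fin d)).card := Finset.card_image_le
    _ = d := by simp

lemma rowcells_le {f : Fin d → Fin m × Fin n} {a : Fin m}
    (h : ∀ b, ∃ i, f i = (a, b)) : n ≤ d := by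
  classical
  have hle := card_le_d f (Finset.univ.image (fun b : Fin n => ((a, b) : Fin m × Fin n)))
    (by
      intro x hx
      obtain ⟨b, -, rfl⟩ := Finset.mem_image.mp hx
      exact h b)
  rwa [Finset.card_image_of_injective _ (fun b b' hbb => by simpa using hbb),
    Finset.card_univ, Fintype.card_fin] at hle

lemma colcells_le {f : Fin d → Fin m × Fin n} {b : Fin n}
    (h : ∀ a, ∃ i, f i = (a, b)) : m ≤ d := by
  classical
  have hle := card_le_d f (Finset.univ.image (fun a : Fin m => ((a, b) : Fin m × Fin n)))
    (by
      intro x hx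
      obtain ⟨a, -, rfl⟩ := Finset.mem_image.mp hx
      exact h a)
  rwa [Finset.card_image_of_injective _ (fun a a' haa => by simpa using haa),
    Finset.card_univ, Fintype.card_fin] at hle

theorem lower (hm : 2 ≤ m) (hmn : m ≤ n)
    (hs : Successful (pathGraph m □ pathGraph n) k t) : m ≤ d := by
  classical
  by_contra hlt
  push_neg at hlt
  have hvp := hs.1
  obtain ⟨i0, s0, -⟩ := hs.2 (⟨0, by omega⟩, ⟨0, by omega⟩)
  have hd0 : 0 < d := i0.pos
  -- the first stage with a fully protected row or column
  have hQex : ∃ s, (∃ a, RowFull t s a) ∨ (∃ b, ColFull t s b) := by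
    obtain ⟨s, hsfull⟩ := exists_full_stage hs
    exact ⟨s, Or.inl ⟨⟨0, by omega⟩, fun b => hsfull _⟩⟩
  have hQσ := Nat.find_spec hQex
  have hQmin : ∀ r < Nat.find hQex, ¬ ((∃ a, RowFull t r a) ∨ (∃ b, ColFull t r b)) :=
    fun r hr => Nat.find_min hQex hr
  have hσpos : 0 < Nat.find hQex := by
    rcases Nat.eq_zero_or_pos (Nat.find hQex) with h | h
    · exfalso
      rw [h] at hQσ
      rcases hQσ with ⟨a, ha⟩ | ⟨b, hb⟩
      · have hmv : ∀ b : Fin n, ∃ i, t 0 i = (a, b) := by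
          intro b
          obtain ⟨i, s', hs', he⟩ := ha b
          exact ⟨i, by rwa [Nat.le_zero.mp hs'] at he⟩
        have := rowcells_le hmv
        omega
      · have hmv : ∀ a : Fin m, ∃ i, t 0 i = (a, b) := by
          intro a
          obtain ⟨i, s', hs', he⟩ := hb a
          exact ⟨i, by rwa [Nat.le_zero.mp hs'] at he⟩
        have := colcells_le hmv
        omega
    · exact h
  obtain ⟨s₀, hσ⟩ : ∃ s₀, Nat.find hQex = s₀ + 1 := ⟨Nat.find hQex - 1, by omega⟩
  rw [hσ] at hQσ
  have hnr : ∀ a, ¬ RowFull t s₀ a := fun a ha => hQmin s₀ (by omega) (Or.inl ⟨a, ha⟩)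
  have hnc : ∀ b, ¬ ColFull t s₀ b := fun b hb => hQmin s₀ (by omega) (Or.inr ⟨b, hb⟩)
  -- both a full row and a full column exist at stage σ = s₀ + 1
  have hFCex : ∃ b, ColFull t (s₀ + 1) b := by
    rcases hQσ with ⟨a₀, ha₀⟩ | h
    · by_contra h
      push_neg at h
      have hwit : ∀ b : Fin n, ∃ i, (t (s₀ + 1) i).2 = b := fun b =>
        col_witness hvp ⟨a₀, ha₀ b⟩ (h b)
      have hcard := card_le_d (fun i => (t (s₀ + 1) i).2) Finset.univ
        (fun b _ => hwit b)
      rw [Finset.card_univ, Fintype.card_fin] at hcard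
      omega
    · exact h
  have hFRex : ∃ a, RowFull t (s₀ + 1) a := by
    obtain ⟨C, hC⟩ := hFCex
    by_contra h
    push_neg at h
    have hwit : ∀ a : Fin m, ∃ i, (t (s₀ + 1) i).1 = a := fun a =>
      row_witness hvp ⟨C, hC a⟩ (h a)
    have hcard := card_le_d (fun i => (t (s₀ + 1) i).1) Finset.univ
      (fun a _ => hwit a)
    rw [Finset.card_univ, Fintype.card_fin] at hcard
    omega
  obtain ⟨C, hC⟩ := hFCex
  obtain ⟨a₀, ha₀⟩ := hFRex
  -- basic finsets
  set NER : Finset (Fin m) := Finset.univ.filter (fun a => RowNE t s₀ a) with hNERdef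
  set NEC : Finset (Fin n) := Finset.univ.filter (fun b => ColNE t s₀ b) with hNECdef
  set ER : Finset (Fin m) := Finset.univ.filter (fun a => ¬ RowNE t s₀ a) with hERdef
  set EC : Finset (Fin n) := Finset.univ.filter (fun b => ¬ ColNE t s₀ b) with hECdef
  set FR : Finset (Fin m) := Finset.univ.filter (fun a => RowFull t (s₀ + 1) a) with hFRdef
  set FC : Finset (Fin n) := Finset.univ.filter (fun b => ColFull t (s₀ + 1) b) with hFCdef
  set NFR : Finset (Fin m) := Finset.univ.filter (fun a => ¬ RowFull t (s₀ + 1) a) with hNFRdef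
  set NFC : Finset (Fin n) := Finset.univ.filter (fun b => ¬ ColFull t (s₀ + 1) b) with hNFCdef
  have hNERsplit : NER.card + ER.card = m := by
    rw [hNERdef, hERdef]
    rw [Finset.card_filter_add_card_filter_not, Finset.card_univ, Fintype.card_fin]
  have hNECsplit : NEC.card + EC.card = n := by
    rw [hNECdef, hECdef]
    rw [Finset.card_filter_add_card_filter_not, Finset.card_univ, Fintype.card_fin]
  have hFRsplit : FR.card + NFR.card = m := by
    rw [hFRdef, hNFRdef]
    rw [Finset.card_filter_add_card_filter_not, Finset.card_univ, Fintype.card_fin]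
  have hFCsplit : FC.card + NFC.card = n := by
    rw [hFCdef, hNFCdef]
    rw [Finset.card_filter_add_card_filter_not, Finset.card_univ, Fintype.card_fin]
  -- mixed-line counts at stage s₀
  have hW1 : NER.card ≤ d :=
    card_le_d (fun i => (t s₀ i).1) NER (fun a ha =>
      row_witness hvp (Finset.mem_filter.mp ha).2 (hnr a))
  have hW2 : NEC.card ≤ d :=
    card_le_d (fun i => (t s₀ i).2) NEC (fun b hb =>
      col_witness hvp (Finset.mem_filter.mp hb).2 (hnc b))
  -- an empty row at stage s₀
  have hieex : ∃ a : Fin m, ¬ RowNE t s₀ a := by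
    by_contra h
    push_neg at h
    have : NER = Finset.univ := by
      rw [hNERdef]
      exact Finset.filter_true_of_mem (fun a _ => h a)
    rw [this, Finset.card_univ, Fintype.card_fin] at hW1
    omega
  obtain ⟨ie, hie⟩ := hieex
  have hieS : ∀ b, (ie, b) ∉ protectedSet t s₀ := fun b hb => hie ⟨b, hb⟩
  -- a hole in row ie at stage σ
  have hbuex : ∃ b, (ie, b) ∉ protectedSet t (s₀ + 1) := by
    by_contra h
    push_neg at h
    have hmv : ∀ b : Fin n, ∃ i, t (s₀ + 1) i = (ie, b) := fun b =>
      ((new_cell hvp (h b) (hieS b)).imp (fun i hi => hi.1))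
    have := rowcells_le hmv
    omega
  obtain ⟨bu, hbu⟩ := hbuex
  -- rows/cols full at σ were nonempty at s₀
  have hFRsub : FR ⊆ NER := by
    intro a ha
    have haFull : RowFull t (s₀ + 1) a := (Finset.mem_filter.mp ha).2
    rw [hNERdef]
    refine Finset.mem_filter.mpr ⟨Finset.mem_univ _, ?_⟩
    by_contra hne
    have hS0 : ∀ b, (a, b) ∉ protectedSet t s₀ := fun b hb => hne ⟨b, hb⟩
    have hmv : ∀ b : Fin n, ∃ i, t (s₀ + 1) i = (a, b) := fun b =>
      ((new_cell hvp (haFull b) (hS0 b)).imp (fun i hi => hi.1))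
    have := rowcells_le hmv
    omega
  have hFCsub : FC ⊆ NEC := by
    intro b hb
    have hbFull : ColFull t (s₀ + 1) b := (Finset.mem_filter.mp hb).2
    rw [hNECdef]
    refine Finset.mem_filter.mpr ⟨Finset.mem_univ _, ?_⟩
    by_contra hne
    have hS0 : ∀ a, (a, b) ∉ protectedSet t s₀ := fun a ha => hne ⟨a, ha⟩
    have hmv : ∀ a : Fin m, ∃ i, t (s₀ + 1) i = (a, b) := fun a =>
      ((new_cell hvp (hbFull a) (hS0 a)).imp (fun i hi => hi.1))
    have := colcells_le hmv
    omega
  -- Count 3 : NFR.card + 1 ≤ d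
  have hC3 : NFR.card + 1 ≤ d := by
    -- adjacent full / non-full rows
    have hpair : ∃ x y : Fin m, RowFull t (s₀ + 1) x ∧ ¬ RowFull t (s₀ + 1) y ∧
        (x.val + 1 = y.val ∨ y.val + 1 = x.val) := by
      set P : ℕ → Prop := fun c => ∃ h : c < m, RowFull t (s₀ + 1) ⟨c, h⟩ with hPdef
      have hP1 : P a₀.val := ⟨a₀.isLt, by simpa using ha₀⟩
      have hP2 : ¬ P ie.val := by
        rintro ⟨h, hfull⟩
        exact hbu (by simpa using hfull bu)
      have hne0 : a₀.val ≠ ie.val := fun h => hP2 (h ▸ hP1)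
      rcases Nat.lt_or_ge a₀.val ie.val with h | h
      · obtain ⟨c, -, hcb, hc1, hc2⟩ := nat_walk hP1 hP2 h
        have haux := ie.isLt
        have hcm : c < m := by omega
        have hcm1 : c + 1 < m := by omega
        exact ⟨⟨c, hcm⟩, ⟨c + 1, hcm1⟩, hc1.2,
          (fun hfull => hc2 ⟨hcm1, hfull⟩), Or.inl rfl⟩
      · have h' : ie.val < a₀.val := by omega
        obtain ⟨c, -, hcb, hc1, hc2⟩ := nat_walk (P := fun c => ¬ P c) hP2 (not_not.mpr hP1) h'
        have haux := a₀.isLt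
        have hcm1 : c + 1 < m := by omega
        have hcm : c < m := by omega
        exact ⟨⟨c + 1, hcm1⟩, ⟨c, hcm⟩, (not_not.mp hc2).2,
          (fun hfull => hc1 ⟨hcm, hfull⟩), Or.inr rfl⟩
    obtain ⟨x, y, hx, hy, hxy⟩ := hpair
    have hb'ex : ∃ b', (y, b') ∉ protectedSet t (s₀ + 1) := by
      by_contra h
      push_neg at h
      exact hy h
    obtain ⟨b', hb'⟩ := hb'ex
    have hadjxy : (pathGraph m □ pathGraph n).Adj (x, b') (y, b') :=
      boxProd_adj.mpr (Or.inl ⟨pathGraph_adj.mpr hxy, rfl⟩)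
    obtain ⟨iw, hiw⟩ := boundary_occupied hvp (hx b') hadjxy hb'
    have hxnotin : x ∉ NFR := by
      rw [hNFRdef]
      simp only [Finset.mem_filter, Finset.mem_univ, true_and, not_not]
      exact hx
    have hcard := card_le_d (fun i => (t (s₀ + 1) i).1) (insert x NFR) ?_
    · rwa [Finset.card_insert_of_notMem hxnotin] at hcard
    · intro a ha
      rcases Finset.mem_insert.mp ha with rfl | ha
      · exact ⟨iw, by simp [hiw]⟩
      · have hnf : ¬ RowFull t (s₀ + 1) a := (Finset.mem_filter.mp ha).2
        exact row_witness hvp ⟨C, hC a⟩ hnf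
  -- Count 4 : NFC.card + 1 ≤ d
  have hC4 : NFC.card + 1 ≤ d := by
    have hpair : ∃ x y : Fin n, ColFull t (s₀ + 1) x ∧ ¬ ColFull t (s₀ + 1) y ∧
        (x.val + 1 = y.val ∨ y.val + 1 = x.val) := by
      set P : ℕ → Prop := fun c => ∃ h : c < n, ColFull t (s₀ + 1) ⟨c, h⟩ with hPdef
      have hP1 : P C.val := ⟨C.isLt, by simpa using hC⟩
      have hP2 : ¬ P bu.val := by
        rintro ⟨h, hfull⟩
        exact hbu (by simpa using hfull ie)
      have hne0 : C.val ≠ bu.val := fun h => hP2 (h ▸ hP1)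
      rcases Nat.lt_or_ge C.val bu.val with h | h
      · obtain ⟨c, -, hcb, hc1, hc2⟩ := nat_walk hP1 hP2 h
        have haux := bu.isLt
        have hcm : c < n := by omega
        have hcm1 : c + 1 < n := by omega
        exact ⟨⟨c, hcm⟩, ⟨c + 1, hcm1⟩, hc1.2,
          (fun hfull => hc2 ⟨hcm1, hfull⟩), Or.inl rfl⟩
      · have h' : bu.val < C.val := by omega
        obtain ⟨c, -, hcb, hc1, hc2⟩ := nat_walk (P := fun c => ¬ P c) hP2 (not_not.mpr hP1) h'
        have haux := C.isLt
        have hcm1 : c + 1 < n := by omega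
        have hcm : c < n := by omega
        exact ⟨⟨c + 1, hcm1⟩, ⟨c, hcm⟩, (not_not.mp hc2).2,
          (fun hfull => hc1 ⟨hcm, hfull⟩), Or.inr rfl⟩
    obtain ⟨x, y, hx, hy, hxy⟩ := hpair
    have ha'ex : ∃ a', (a', y) ∉ protectedSet t (s₀ + 1) := by
      by_contra h
      push_neg at h
      exact hy h
    obtain ⟨a', ha'⟩ := ha'ex
    have hadjxy : (pathGraph m □ pathGraph n).Adj (a', x) (a', y) :=
      boxProd_adj.mpr (Or.inr ⟨pathGraph_adj.mpr hxy, rfl⟩)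
    obtain ⟨iw, hiw⟩ := boundary_occupied hvp (hx a') hadjxy ha'
    have hxnotin : x ∉ NFC := by
      rw [hNFCdef]
      simp only [Finset.mem_filter, Finset.mem_univ, true_and, not_not]
      exact hx
    have hcard := card_le_d (fun i => (t (s₀ + 1) i).2) (insert x NFC) ?_
    · rwa [Finset.card_insert_of_notMem hxnotin] at hcard
    · intro b hb
      rcases Finset.mem_insert.mp hb with rfl | hb
      · exact ⟨iw, by simp [hiw]⟩
      · have hnf : ¬ ColFull t (s₀ + 1) b := (Finset.mem_filter.mp hb).2
        exact col_witness hvp ⟨a₀, ha₀ b⟩ hnf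
  -- searchers per row at stage s₀
  set srch : Fin m → Finset (Fin d) :=
    fun a => Finset.univ.filter (fun i => (t s₀ i).1 = a) with hsrchdef
  set srchc : Fin n → Finset (Fin d) :=
    fun b => Finset.univ.filter (fun i => (t s₀ i).2 = b) with hsrchcdef
  have hfib : d = ∑ a : Fin m, (srch a).card := by
    rw [hsrchdef]
    rw [← Finset.card_eq_sum_card_fiberwise
      (f := fun i : Fin d => (t s₀ i).1) (fun i _ => Finset.mem_univ _)]
    rw [Finset.card_univ, Fintype.card_fin]
  have hfibc : d = ∑ b : Fin n, (srchc b).card := by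
    rw [hsrchcdef]
    rw [← Finset.card_eq_sum_card_fiberwise
      (f := fun i : Fin d => (t s₀ i).2) (fun i _ => Finset.mem_univ _)]
    rw [Finset.card_univ, Fintype.card_fin]
  -- Count 1
  have hrowbig : ∀ a ∈ FR, EC.card ≤ (srch a).card := by
    intro a haF
    have haFull : RowFull t (s₀ + 1) a := (Finset.mem_filter.mp haF).2
    have hmv : ∀ b : Fin n, ∃ i : Fin d,
        b ∈ EC → (t (s₀ + 1) i = (a, b) ∧ (t s₀ i).1 = a) := by
      intro b
      by_cases hbE : b ∈ EC
      · have hbemp : ∀ a', (a', b) ∉ protectedSet t s₀ := by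
          have hxx := (Finset.mem_filter.mp hbE).2
          exact fun a' h => hxx ⟨a', h⟩
        obtain ⟨i, hi1, hi2, hi3, -⟩ := new_cell hvp (haFull b) (hbemp a)
        refine ⟨i, fun _ => ⟨hi1, ?_⟩⟩
        rcases boxProd_adj.mp hi3 with ⟨h1, h2⟩ | ⟨h1, h2⟩
        · exfalso
          refine hbemp (t s₀ i).1 ?_
          have hv : ((t s₀ i).1, b) = t s₀ i := Prod.ext rfl h2.symm
          rw [hv]
          exact hi2
        · exact h2
      · exact ⟨⟨0, hd0⟩, fun h => absurd h hbE⟩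
    choose ψ hψ using hmv
    refine Finset.card_le_card_of_injOn ψ ?_ ?_
    · intro b hb
      rw [hsrchdef]
      simp only [Finset.mem_filter, Finset.mem_univ, true_and]
      simpa using (hψ b hb).2
    · intro b hb b' hb' heq
      have h1 := (hψ b (Finset.mem_coe.mp hb)).1
      have h2 := (hψ b' (Finset.mem_coe.mp hb')).1
      rw [heq] at h1
      have h3 := h1.symm.trans h2
      simpa using h3
  have hcolbig : ∀ b ∈ FC, ER.card ≤ (srchc b).card := by
    intro b hbF
    have hbFull : ColFull t (s₀ + 1) b := (Finset.mem_filter.mp hbF).2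
    have hmv : ∀ a : Fin m, ∃ i : Fin d,
        a ∈ ER → (t (s₀ + 1) i = (a, b) ∧ (t s₀ i).2 = b) := by
      intro a
      by_cases haE : a ∈ ER
      · have haemp : ∀ b', (a, b') ∉ protectedSet t s₀ := by
          have hxx := (Finset.mem_filter.mp haE).2
          exact fun b' h => hxx ⟨b', h⟩
        obtain ⟨i, hi1, hi2, hi3, -⟩ := new_cell hvp (hbFull a) (haemp b)
        refine ⟨i, fun _ => ⟨hi1, ?_⟩⟩
        rcases boxProd_adj.mp hi3 with ⟨h1, h2⟩ | ⟨h1, h2⟩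
        · exact h2
        · exfalso
          refine haemp (t s₀ i).2 ?_
          have hv : (a, (t s₀ i).2) = t s₀ i := Prod.ext h2.symm rfl
          rw [hv]
          exact hi2
      · exact ⟨⟨0, hd0⟩, fun h => absurd h haE⟩
    choose ψ hψ using hmv
    refine Finset.card_le_card_of_injOn ψ ?_ ?_
    · intro a ha
      rw [hsrchcdef]
      simp only [Finset.mem_filter, Finset.mem_univ, true_and]
      simpa using (hψ a ha).2
    · intro a ha a' ha' heq
      have h1 := (hψ a (Finset.mem_coe.mp ha)).1
      have h2 := (hψ a' (Finset.mem_coe.mp ha')).1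
      rw [heq] at h1
      have h3 := h1.symm.trans h2
      simpa using h3
  have hrow1 : ∀ a ∈ NER \ FR, 1 ≤ (srch a).card := by
    intro a ha
    obtain ⟨i, hi⟩ := row_witness hvp
      (Finset.mem_filter.mp (Finset.mem_sdiff.mp ha).1).2 (hnr a)
    refine Finset.card_pos.mpr ⟨i, ?_⟩
    rw [hsrchdef]
    simp [hi]
  have hcol1 : ∀ b ∈ NEC \ FC, 1 ≤ (srchc b).card := by
    intro b hb
    obtain ⟨i, hi⟩ := col_witness hvp
      (Finset.mem_filter.mp (Finset.mem_sdiff.mp hb).1).2 (hnc b)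
    refine Finset.card_pos.mpr ⟨i, ?_⟩
    rw [hsrchcdef]
    simp [hi]
  have hC1 : FR.card * EC.card + (NER.card - FR.card) ≤ d := by
    calc FR.card * EC.card + (NER.card - FR.card)
        = (∑ _a ∈ FR, EC.card) + ∑ _a ∈ NER \ FR, 1 := by
          simp [Finset.sum_const, smul_eq_mul, Finset.card_sdiff_of_subset hFRsub]
      _ ≤ (∑ a ∈ FR, (srch a).card) + ∑ a ∈ NER \ FR, (srch a).card :=
          add_le_add (Finset.sum_le_sum hrowbig) (Finset.sum_le_sum hrow1)
      _ = ∑ a ∈ FR ∪ (NER \ FR), (srch a).card :=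
          (Finset.sum_union Finset.disjoint_sdiff).symm
      _ ≤ ∑ a : Fin m, (srch a).card :=
          Finset.sum_le_sum_of_subset (Finset.subset_univ _)
      _ = d := hfib.symm
  have hC2 : FC.card * ER.card + (NEC.card - FC.card) ≤ d := by
    calc FC.card * ER.card + (NEC.card - FC.card)
        = (∑ _b ∈ FC, ER.card) + ∑ _b ∈ NEC \ FC, 1 := by
          simp [Finset.sum_const, smul_eq_mul, Finset.card_sdiff_of_subset hFCsub]
      _ ≤ (∑ b ∈ FC, (srchc b).card) + ∑ b ∈ NEC \ FC, (srchc b).card :=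
          add_le_add (Finset.sum_le_sum hcolbig) (Finset.sum_le_sum hcol1)
      _ = ∑ b ∈ FC ∪ (NEC \ FC), (srchc b).card :=
          (Finset.sum_union Finset.disjoint_sdiff).symm
      _ ≤ ∑ b : Fin n, (srchc b).card :=
          Finset.sum_le_sum_of_subset (Finset.subset_univ _)
      _ = d := hfibc.symm
  -- arithmetic: NER.card = d
  have hFRle : FR.card ≤ NER.card := Finset.card_le_card hFRsub
  have hFCle : FC.card ≤ NEC.card := Finset.card_le_card hFCsub
  have hFR2 : 2 ≤ FR.card := by omega
  have hFC2 : 2 ≤ FC.card := by omega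
  have hEC1 : 1 ≤ EC.card := by omega
  have hER1 : 1 ≤ ER.card := by omega
  obtain ⟨e, he⟩ : ∃ e, EC.card = e + 1 := ⟨EC.card - 1, by omega⟩
  obtain ⟨e', he'⟩ : ∃ e', ER.card = e' + 1 := ⟨ER.card - 1, by omega⟩
  rw [he, Nat.mul_succ] at hC1
  rw [he', Nat.mul_succ] at hC2
  have hq1 : 2 * e ≤ FR.card * e := mul_le_mul_left hFR2 e
  have hq2 : 2 * e' ≤ FC.card * e' := mul_le_mul_left hFC2 e'
  have hr1d : NER.card = d := by omega
  -- each nonempty row holds exactly one searcher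
  have hzero : ∀ a : Fin m, a ∉ NER → (srch a).card = 0 := by
    intro a ha
    rw [Finset.card_eq_zero, Finset.eq_empty_iff_forall_notMem]
    intro i hi
    rw [hsrchdef] at hi
    simp only [Finset.mem_filter, Finset.mem_univ, true_and] at hi
    apply ha
    rw [hNERdef]
    refine Finset.mem_filter.mpr ⟨Finset.mem_univ _, ⟨(t s₀ i).2, ?_⟩⟩
    rw [← hi]
    simpa using pos_mem_protected t s₀ i
  have hone : ∀ a ∈ NER, (srch a).card = 1 := by
    by_contra hcon
    push_neg at hcon
    obtain ⟨a₁, ha₁, hne1⟩ := hcon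
    have hge1 : 1 ≤ (srch a₁).card := by
      obtain ⟨i, hi⟩ := row_witness hvp (Finset.mem_filter.mp ha₁).2 (hnr a₁)
      refine Finset.card_pos.mpr ⟨i, ?_⟩
      rw [hsrchdef]
      simp [hi]
    have hge2 : 2 ≤ (srch a₁).card := by omega
    have hbig : d + 1 ≤ ∑ a : Fin m, (srch a).card := by
      have hsum1 : ∑ a ∈ NER, (srch a).card = (srch a₁).card
          + ∑ a ∈ NER.erase a₁, (srch a).card :=
        (Finset.add_sum_erase NER _ ha₁).symm
      have hsum2 : (NER.erase a₁).card ≤ ∑ a ∈ NER.erase a₁, (srch a).card := by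
        have haux : ∀ a ∈ NER.erase a₁, 1 ≤ (srch a).card := by
          intro a ha
          have haNER : a ∈ NER := Finset.mem_of_mem_erase ha
          obtain ⟨i, hi⟩ := row_witness hvp (Finset.mem_filter.mp haNER).2 (hnr a)
          refine Finset.card_pos.mpr ⟨i, ?_⟩
          rw [hsrchdef]
          simp [hi]
        calc (NER.erase a₁).card = ∑ _a ∈ NER.erase a₁, 1 := by simp
          _ ≤ _ := Finset.sum_le_sum haux
      have hsum3 : ∑ a ∈ NER, (srch a).card ≤ ∑ a : Fin m, (srch a).card :=
        Finset.sum_le_sum_of_subset (Finset.subset_univ _)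
      have hcarderase : (NER.erase a₁).card = d - 1 := by
        rw [Finset.card_erase_of_mem ha₁, hr1d]
      omega
    omega
  -- the final contradiction
  obtain ⟨istar, hi1, hi2, hi3, hcond⟩ := new_cell hvp (hC ie) (hieS C)
  rcases boxProd_adj.mp hi3 with ⟨hadj1, hv2C⟩ | ⟨h1, h2⟩
  swap
  · refine hieS (t s₀ istar).2 ?_
    have hv : t s₀ istar = (ie, (t s₀ istar).2) := Prod.ext h2 rfl
    rw [← hv]
    exact hi2
  -- hadj1 : Adj (t s₀ istar).1 ie, hv2C : (t s₀ istar).2 = C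
  have hv1ne : (t s₀ istar).1 ≠ ie := hadj1.ne
  have hv1NER : (t s₀ istar).1 ∈ NER := by
    rw [hNERdef]
    refine Finset.mem_filter.mpr ⟨Finset.mem_univ _, ⟨(t s₀ istar).2, ?_⟩⟩
    simpa using hi2
  have hv1card : (srch (t s₀ istar).1).card = 1 := hone _ hv1NER
  have hcell : ∀ b : Fin n, ((t s₀ istar).1, b) ∈ protectedSet t s₀ →
      (((t s₀ istar).1, b) : Fin m × Fin n) = t s₀ istar := by
    intro b hbmem
    have hadj2 : (pathGraph m □ pathGraph n).Adj ((t s₀ istar).1, b) (ie, b) :=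
      boxProd_adj.mpr (Or.inl ⟨hadj1, rfl⟩)
    obtain ⟨j, hj⟩ := boundary_occupied hvp hbmem hadj2 (hieS b)
    by_contra hne
    have hjmem : j ∈ srch (t s₀ istar).1 := by
      rw [hsrchdef]
      simp only [Finset.mem_filter, Finset.mem_univ, true_and]
      rw [hj]
    have histarmem : istar ∈ srch (t s₀ istar).1 := by
      rw [hsrchdef]
      simp
    have hji : j ≠ istar := by
      intro h
      rw [h] at hj
      exact hne hj.symm
    have h2card : 1 < (srch (t s₀ istar).1).card :=
      Finset.one_lt_card.mpr ⟨j, hjmem, istar, histarmem, hji⟩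
    omega
  have hn2 : 2 ≤ n := le_trans hm hmn
  obtain ⟨C', hC'adj, hC'ne⟩ : ∃ C' : Fin n, (pathGraph n).Adj C C' ∧ C' ≠ C := by
    by_cases h : C.val + 1 < n
    · exact ⟨⟨C.val + 1, h⟩, pathGraph_adj.mpr (Or.inl rfl),
        Fin.ne_of_val_ne (by simp)⟩
    · have h1 : C.val = n - 1 := by have := C.isLt; omega
      have h2 : 1 ≤ C.val := by omega
      exact ⟨⟨C.val - 1, by omega⟩, pathGraph_adj.mpr (Or.inr (by simp; omega)),
        Fin.ne_of_val_ne (by simp; omega)⟩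
  have hu2 : (((t s₀ istar).1, C') : Fin m × Fin n) ∉ protectedSet t s₀ := by
    intro hmem
    apply hC'ne
    have h3 := hcell C' hmem
    have h4 : C' = (t s₀ istar).2 := congrArg Prod.snd h3
    rw [h4, hv2C]
  have hu1u2 : ((ie, C) : Fin m × Fin n) ≠ ((t s₀ istar).1, C') :=
    fun h => hv1ne ((congrArg Prod.fst h).symm)
  have hsubpair : ({((ie, C) : Fin m × Fin n), ((t s₀ istar).1, C')} : Set (Fin m × Fin n))
      ⊆ unprotNbrs (pathGraph m □ pathGraph n) t s₀ (t s₀ istar) := by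
    intro u hu
    rcases hu with rfl | hu
    · exact ⟨hi3, hieS C⟩
    · rw [Set.mem_singleton_iff] at hu
      subst hu
      refine ⟨?_, hu2⟩
      refine boxProd_adj.mpr (Or.inr ⟨?_, rfl⟩)
      rw [hv2C]
      exact hC'adj
  have hcard2 : 2 ≤ (unprotNbrs (pathGraph m □ pathGraph n) t s₀ (t s₀ istar)).ncard := by
    have hpaircard : ({((ie, C) : Fin m × Fin n), ((t s₀ istar).1, C')}
        : Set (Fin m × Fin n)).ncard = 2 := Set.ncard_pair hu1u2
    rw [← hpaircard]
    exact Set.ncard_le_ncard hsubpair (Set.toFinite _)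
  have hmob1 : (mobileOn k t s₀ (t s₀ istar)).ncard ≤ 1 := by
    have hsub2 : mobileOn k t s₀ (t s₀ istar) ⊆ ↑(srch (t s₀ istar).1) := by
      intro j hj
      rw [hsrchdef]
      simp only [Finset.coe_filter, Finset.mem_univ, true_and, Set.mem_setOf_eq]
      rw [hj.1]
    calc (mobileOn k t s₀ (t s₀ istar)).ncard
        ≤ (↑(srch (t s₀ istar).1) : Set (Fin d)).ncard :=
          Set.ncard_le_ncard hsub2 (Set.toFinite _)
      _ = (srch (t s₀ istar).1).card := Set.ncard_coe_finset _
      _ = 1 := hv1card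
  have hfinal := hcond.2
  omega

end GridLB

namespace GridUB

open Deduction SimpleGraph

variable {m n k : ℕ}

/-- The sweeping play: searcher `i` walks along row `i`. -/
def sweep (m n : ℕ) (hn : 0 < n) : ℕ → Fin m → Fin m × Fin n :=
  fun s i => (i, ⟨min s (n - 1), by omega⟩)

lemma sweep_mem (hn : 0 < n) (s : ℕ) (v : Fin m × Fin n) :
    v ∈ protectedSet (sweep m n hn) s ↔ v.2.val ≤ min s (n - 1) := by
  constructor
  · rintro ⟨i, s', hs', he⟩
    have hval := congrArg (fun p : Fin m × Fin n => p.2.val) he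
    simp only [sweep] at hval
    omega
  · intro h
    refine ⟨v.1, v.2.val, by omega, ?_⟩
    have hlt := v.2.isLt
    exact Prod.ext rfl (Fin.ext (by show min v.2.val (n - 1) = v.2.val; omega))

lemma sweep_moves (hn : 0 < n) (i : Fin m) (s : ℕ) :
    movesBefore (sweep m n hn) i s = min s (n - 1) := by
  unfold movesBefore
  have hset : {s' : ℕ | s' < s ∧ sweep m n hn (s' + 1) i ≠ sweep m n hn s' i}
      = ↑(Finset.range (min s (n - 1))) := by
    ext x
    simp only [Set.mem_setOf_eq, Finset.coe_range, Set.mem_Iio]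
    constructor
    · rintro ⟨h1, h2⟩
      by_contra hx
      apply h2
      exact Prod.ext rfl (Fin.ext (by show min (x + 1) (n - 1) = min x (n - 1); omega))
    · intro hx
      refine ⟨by omega, ?_⟩
      intro he
      have hval := congrArg (fun p : Fin m × Fin n => p.2.val) he
      simp only [sweep] at hval
      omega
  rw [hset, Set.ncard_coe_finset, Finset.card_range]

lemma sweep_valid (hn2 : 2 ≤ n) (hnk : n ≤ k + 1) (hn : 0 < n) :
    ValidPlay (pathGraph m □ pathGraph n) k (sweep m n hn) := by
  refine ⟨?_, ?_, ?_⟩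
  · intro i s
    by_cases hs : s < n - 1
    · right
      refine boxProd_adj.mpr (Or.inr ⟨?_, rfl⟩)
      exact pathGraph_adj.mpr (Or.inl (show min s (n - 1) + 1 = min (s + 1) (n - 1) by omega))
    · left
      exact Prod.ext rfl (Fin.ext (by show min (s + 1) (n - 1) = min s (n - 1); omega))
  · intro i s
    rw [sweep_moves]
    omega
  · intro s v
    rcases lt_trichotomy v.2.val (min s (n - 1)) with hv | hv | hv
    · have hemp : unprotNbrs (pathGraph m □ pathGraph n) (sweep m n hn) s v = ∅ := by
        ext u
        simp only [unprotNbrs, Set.mem_setOf_eq, Set.mem_empty_iff_false, iff_false, not_and]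
        intro hadj hu
        apply hu
        rw [sweep_mem]
        rcases boxProd_adj.mp hadj with ⟨h1, h2⟩ | ⟨h1, h2⟩
        · rw [← h2]; omega
        · rcases pathGraph_adj.mp h1 with h | h <;> omega
      constructor
      · rintro ⟨⟨u, hu⟩, -⟩
        rw [hemp] at hu
        exact absurd hu (Set.notMem_empty u)
      · intro _ i hi
        exfalso
        have hval := congrArg (fun p : Fin m × Fin n => p.2.val) hi
        simp only [sweep] at hval
        omega
    · by_cases hs : s < n - 1
      · have hsn : s + 1 < n := by omega
        have huep : unprotNbrs (pathGraph m □ pathGraph n) (sweep m n hn) s v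
            = {(v.1, ⟨s + 1, hsn⟩)} := by
          ext u
          simp only [unprotNbrs, Set.mem_setOf_eq, Set.mem_singleton_iff]
          constructor
          · rintro ⟨hadj, hu⟩
            rcases boxProd_adj.mp hadj with ⟨h1, h2⟩ | ⟨h1, h2⟩
            · exfalso
              apply hu
              rw [sweep_mem]
              rw [← h2]
              omega
            · rcases pathGraph_adj.mp h1 with h | h
              · exact Prod.ext h2.symm (Fin.ext (by show u.2.val = s + 1; omega))
              · exfalso
                apply hu
                rw [sweep_mem]
                omega
          · rintro rfl
            refine ⟨boxProd_adj.mpr (Or.inr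
              ⟨pathGraph_adj.mpr (Or.inl (show v.2.val + 1 = s + 1 by omega)), rfl⟩), ?_⟩
            rw [sweep_mem]
            show ¬ (s + 1 ≤ min s (n - 1))
            omega
        have hmob : mobileOn k (sweep m n hn) s v = {v.1} := by
          ext i
          simp only [mobileOn, Set.mem_setOf_eq, Set.mem_singleton_iff]
          constructor
          · rintro ⟨h1, -⟩
            exact congrArg Prod.fst h1
          · rintro rfl
            refine ⟨Prod.ext rfl (Fin.ext (by show min s (n - 1) = v.2.val; omega)), ?_⟩
            rw [sweep_moves]
            omega
        constructor
        · intro _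
          constructor
          · intro i hi
            rw [hmob, Set.mem_singleton_iff] at hi
            subst hi
            rw [huep]
            show sweep m n hn (s + 1) v.1 ∈ ({(v.1, ⟨s + 1, hsn⟩)} : Set (Fin m × Fin n))
            rw [Set.mem_singleton_iff]
            exact Prod.ext rfl (Fin.ext (by show min (s + 1) (n - 1) = s + 1; omega))
          · intro u hu
            rw [huep, Set.mem_singleton_iff] at hu
            refine ⟨v.1, ?_, ?_⟩
            · rw [hmob]; rfl
            · rw [hu]
              exact Prod.ext rfl (Fin.ext (by show min (s + 1) (n - 1) = s + 1; omega))
        · intro hnc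
          exfalso
          apply hnc
          refine ⟨?_, ?_⟩
          · rw [huep]; exact ⟨_, rfl⟩
          · rw [huep, hmob, Set.ncard_singleton, Set.ncard_singleton]
      · have hemp : unprotNbrs (pathGraph m □ pathGraph n) (sweep m n hn) s v = ∅ := by
          ext u
          simp only [unprotNbrs, Set.mem_setOf_eq, Set.mem_empty_iff_false, iff_false, not_and]
          intro hadj hu
          apply hu
          rw [sweep_mem]
          rcases boxProd_adj.mp hadj with ⟨h1, h2⟩ | ⟨h1, h2⟩
          · rw [← h2]; omega
          · rcases pathGraph_adj.mp h1 with h | h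
            · have := u.2.isLt
              omega
            · omega
        constructor
        · rintro ⟨⟨u, hu⟩, -⟩
          rw [hemp] at hu
          exact absurd hu (Set.notMem_empty u)
        · intro _ i hi
          exact Prod.ext rfl (Fin.ext (by show min (s + 1) (n - 1) = min s (n - 1); omega))
    · have hocc : ∀ i, sweep m n hn s i ≠ v := by
        intro i hi
        have hval := congrArg (fun p : Fin m × Fin n => p.2.val) hi
        simp only [sweep] at hval
        omega
      constructor
      · rintro ⟨⟨u, hu⟩, hle⟩
        exfalso
        have h1 : 0 < (unprotNbrs (pathGraph m □ pathGraph n) (sweep m n hn) s v).ncard := by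
          rw [Set.ncard_pos (Set.toFinite _)]
          exact ⟨u, hu⟩
        have h2 : mobileOn k (sweep m n hn) s v = ∅ := by
          ext i
          simp only [mobileOn, Set.mem_setOf_eq, Set.mem_empty_iff_false, iff_false, not_and]
          intro h1'
          exact absurd h1' (hocc i)
        rw [h2, Set.ncard_empty] at hle
        omega
      · intro _ i hi
        exact absurd hi (hocc i)

lemma sweep_succ (hn2 : 2 ≤ n) (hnk : n ≤ k + 1) (hn : 0 < n) :
    Successful (pathGraph m □ pathGraph n) k (sweep m n hn) := by
  refine ⟨sweep_valid hn2 hnk hn, ?_⟩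
  intro v
  have hlt := v.2.isLt
  exact ⟨v.1, v.2.val,
    Prod.ext rfl (Fin.ext (by show min v.2.val (n - 1) = v.2.val; omega))⟩

end GridUB

open SimpleGraph in
/-- `d_k(P_m □ P_n) = m` when `2 ≤ m ≤ n ≤ k + 1`. -/
theorem stmt_16 (k m n : ℕ) (hk : 1 ≤ k) (hm : 2 ≤ m) (hmn : m ≤ n)
    (hn : n ≤ k + 1) :
    Deduction.deductionNumber (pathGraph m □ pathGraph n) k = m := by
  have hn2 : 2 ≤ n := le_trans hm hmn
  have hn0 : 0 < n := by omega
  have hmem : m ∈ {d : ℕ | ∃ t : ℕ → Fin d → Fin m × Fin n,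
      Deduction.Successful (pathGraph m □ pathGraph n) k t} :=
    ⟨GridUB.sweep m n hn0, GridUB.sweep_succ hn2 hn hn0⟩
  refine le_antisymm (Nat.sInf_le hmem) (le_csInf ⟨m, hmem⟩ ?_)
  rintro d ⟨t, ht⟩
  exact GridLB.lower hm hmn ht
end
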